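/- arXiv:2301.00778 — 2 statements merged into one kernel-verified Lean document; each statement's English description precedes it below -/
import Mathlib

section
/- Intertwining of π⁻ with the re-expansion map (identity (cw28)): Let q ∈ ℝ[[z_k,z_n]] and let Γ* be any row-finite unital algebra endomorphism of ℝ[[z_k,z_n]] (i.e. a linear map induced componentwise by a matrix ((Γ*)_β^γ) with, for each β, only finitely many γ such that (Γ*)_β^γ ≠ 0, which is multiplicative and fixes 𝟙) satisfying Γ* z_k = Σ_{l≥0} (k+l choose k) q^l z_{k+l} for every k ∈ ℕ. Then for all π, π'' ∈ ℝ[[z_k,z_n]], c ∈ ℝ[[z_k]] and ξ ∈ ℝ, one has Γ*(π⁻(π, π'', c, ξ)) = π⁻(Γ*π + q, Γ*π'', c, ξ), where π⁻(π,π'',c,ξ) := Σ_{k≥0} z_k π^k π'' − Σ_{l≥0} (1/l!) π^l (D⁽⁰⁾)^l c + ξ 𝟙. -/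
open MvPowerSeries

noncomputable section

/-- Indices `n ∈ ℕ² \ {(0,0)}` for the variables `z_n`. -/
abbrev Pos2 : Type := {p : ℕ × ℕ // p ≠ (0, 0)}

/-- The variables: `z_k` for `k ∈ ℕ` (left) and `z_n` for `n ∈ ℕ²\{0}` (right). -/
abbrev Var : Type := ℕ ⊕ Pos2

/-- Multi-indices: finitely supported functions from the variables to ℕ. -/
abbrev MIdx : Type := Var →₀ ℕ

/-- The algebra ℝ[[z_k, z_n]] of formal power series. -/
abbrev FPS : Type := MvPowerSeries Var ℝ

/-- The variable `z_k` as a power series. -/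
def zk (k : ℕ) : FPS := MvPowerSeries.X (Sum.inl k)

/-- The variable `z_n` as a power series. -/
def zn (n : Pos2) : FPS := MvPowerSeries.X (Sum.inr n)

/-- The derivation `D⁽⁰⁾ = Σ_k (k+1) z_{k+1} ∂_{z_k}`, defined componentwise by
`(D⁽⁰⁾π)_β = Σ_{k, β(k+1) ≥ 1} (k+1)(β(k)+1) π_{β + e_k - e_{k+1}}`. -/
def Dzero (π : FPS) : FPS := fun β =>
  ∑ j ∈ β.support,
    (match j with
     | Sum.inl (k + 1) =>
         ((k : ℝ) + 1) * ((β (Sum.inl k) : ℝ) + 1) *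
           MvPowerSeries.coeff (R := ℝ)
             (β + Finsupp.single (Sum.inl k) 1 - Finsupp.single (Sum.inl (k + 1)) 1) π
     | _ => 0)

/-- `c ∈ ℝ[[z_k]]`: the subalgebra of series with no `z_n`-dependence. -/
def OnlyZk (c : FPS) : Prop :=
  ∀ β : MIdx, (∃ n : Pos2, β (Sum.inr n) ≠ 0) → MvPowerSeries.coeff (R := ℝ) β c = 0

/-- `[β] := Σ_k k β(k) − Σ_n β(n)`. -/
def bracketZ (β : MIdx) : ℤ :=
  β.sum fun j m => (match j with | Sum.inl k => (k : ℤ) | Sum.inr _ => -1) * (m : ℤ)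

/-- `|β|_p := Σ_n |n| β(n)` where `|n| = n₁ + 2 n₂`. -/
def homP (β : MIdx) : ℝ :=
  β.sum fun j m =>
    (match j with | Sum.inl _ => (0 : ℝ) | Sum.inr n => (n.val.1 : ℝ) + 2 * n.val.2) * (m : ℝ)

/-- The homogeneity `|β| := α (1 + [β]) + |β|_p`. -/
def hom (α : ℝ) (β : MIdx) : ℝ := α * (1 + (bracketZ β : ℝ)) + homP β

/-- `|β|_≺ := |β| + λ β(0)`; the ordering is `γ ≺ β iff |γ|_≺ < |β|_≺`. -/
def ordP (α lam : ℝ) (β : MIdx) : ℝ := hom α β + lam * (β (Sum.inl 0) : ℝ)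

/-- `π⁻ := Σ_{k≥0} z_k π^k π'' − Σ_{l≥0} (1/l!) π^l (D⁽⁰⁾)^l c + ξ 𝟙`, defined
componentwise (all sums are componentwise finite). -/
def piminus (π π'' c : FPS) (ξ : ℝ) : FPS := fun β =>
  (∑ᶠ k : ℕ, MvPowerSeries.coeff (R := ℝ) β (zk k * π ^ k * π''))
    - (∑ᶠ l : ℕ, ((l.factorial : ℝ))⁻¹ * MvPowerSeries.coeff (R := ℝ) β (π ^ l * Dzero^[l] c))
    + ξ * MvPowerSeries.coeff (R := ℝ) β 1

/-- Row-finiteness of a matrix indexed by pairs of multi-indices. -/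
def RowFinite (Γ : MIdx → MIdx → ℝ) : Prop := ∀ β : MIdx, {γ : MIdx | Γ β γ ≠ 0}.Finite

/-- The linear map induced componentwise by a (row-finite) matrix. -/
def applyG (Γ : MIdx → MIdx → ℝ) (π : FPS) : FPS := fun β =>
  ∑ᶠ γ : MIdx, Γ β γ * MvPowerSeries.coeff (R := ℝ) γ π

/-- The prescribed image of `z_k`: `Σ_{l≥0} (k+l choose k) q^l z_{k+l}`, defined
componentwise (only finitely many `l` contribute to each component). -/
def gammaZk (q : FPS) (k : ℕ) : FPS := fun β =>
  ∑ᶠ l : ℕ, (((k + l).choose k : ℝ)) * MvPowerSeries.coeff (R := ℝ) β (q ^ l * zk (k + l))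

/-- The population condition `π⁽ⁿ⁾_β = 0 unless |n| < |β|`. -/
def PopCond (α : ℝ) (pin : ℕ × ℕ → FPS) : Prop :=
  ∀ (n : ℕ × ℕ) (β : MIdx),
    MvPowerSeries.coeff (R := ℝ) β (pin n) ≠ 0 → ((n.1 : ℝ) + 2 * n.2) < hom α β

/-- `Γ` is the re-expansion matrix associated to the family `{π⁽ⁿ⁾}_{n ∈ ℕ²}`:
row-finite, the induced map is a unital algebra endomorphism, and it maps the
coordinates `z_k`, `z_n` as prescribed. -/
def IsReExpansion (pin : ℕ × ℕ → FPS) (Γ : MIdx → MIdx → ℝ) : Prop :=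
  RowFinite Γ ∧
  (∀ π π' : FPS, applyG Γ (π * π') = applyG Γ π * applyG Γ π') ∧
  applyG Γ 1 = 1 ∧
  (∀ k : ℕ, applyG Γ (zk k) = gammaZk (pin (0, 0)) k) ∧
  (∀ n : Pos2, applyG Γ (zn n) = zn n + pin n.val)

/-! ### Infrastructure: finsum helpers -/

section Helpers

variable {ι κ : Type*}

lemma fsum_eq_sum {f : ι → ℝ} {s : Finset ι} (h : ∀ i, f i ≠ 0 → i ∈ s) :
    ∑ᶠ i, f i = ∑ i ∈ s, f i :=
  finsum_eq_sum_of_support_subset f (fun i hi => h i hi)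

lemma finsum_finsum_prod (F : ι → κ → ℝ) (h : {p : ι × κ | F p.1 p.2 ≠ 0}.Finite) :
    ∑ᶠ i, ∑ᶠ j, F i j = ∑ᶠ p : ι × κ, F p.1 p.2 := by
  classical
  set S : Finset ι := h.toFinset.image Prod.fst with hS
  set T : Finset κ := h.toFinset.image Prod.snd with hT
  have hmem : ∀ i j, F i j ≠ 0 → i ∈ S ∧ j ∈ T := by
    intro i j hij
    constructor
    · exact Finset.mem_image.2 ⟨(i, j), h.mem_toFinset.2 hij, rfl⟩
    · exact Finset.mem_image.2 ⟨(i, j), h.mem_toFinset.2 hij, rfl⟩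
  have h1 : ∀ i, ∑ᶠ j, F i j = ∑ j ∈ T, F i j := fun i =>
    fsum_eq_sum (fun j hj => (hmem i j hj).2)
  calc ∑ᶠ i, ∑ᶠ j, F i j = ∑ᶠ i, ∑ j ∈ T, F i j := by simp only [h1]
    _ = ∑ i ∈ S, ∑ j ∈ T, F i j := by
        refine fsum_eq_sum ?_
        intro i hi
        obtain ⟨j, _, hne⟩ := Finset.exists_ne_zero_of_sum_ne_zero hi
        exact (hmem i j hne).1
    _ = ∑ p ∈ S ×ˢ T, F p.1 p.2 := by rw [Finset.sum_product]
    _ = ∑ᶠ p : ι × κ, F p.1 p.2 := by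
        refine (fsum_eq_sum ?_).symm
        intro p hp
        exact Finset.mem_product.2 ⟨(hmem p.1 p.2 hp).1, (hmem p.1 p.2 hp).2⟩

lemma finsum_nat_pairs (F : ℕ × ℕ → ℝ) (h : (Function.support F).Finite) :
    ∑ᶠ p : ℕ × ℕ, F p = ∑ᶠ m : ℕ, ∑ i ∈ Finset.range (m + 1), F (i, m - i) := by
  classical
  set M : ℕ := h.toFinset.sup (fun p => p.1 + p.2) with hM
  set S : Finset (ℕ × ℕ) := (Finset.range (M + 1)).biUnion (fun m => Finset.HasAntidiagonal.antidiagonal m)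
    with hS
  have hmem : ∀ p, F p ≠ 0 → p ∈ S := by
    intro p hp
    refine Finset.mem_biUnion.2 ⟨p.1 + p.2, ?_, ?_⟩
    · exact Finset.mem_range.2 (Nat.lt_succ_of_le
        (Finset.le_sup (f := fun p : ℕ × ℕ => p.1 + p.2) (h.mem_toFinset.2 hp)))
    · simp [Finset.HasAntidiagonal.mem_antidiagonal]
  have hdisj : (↑(Finset.range (M + 1)) : Set ℕ).PairwiseDisjoint
      (fun m => (Finset.HasAntidiagonal.antidiagonal m : Finset (ℕ × ℕ))) := by
    intro m₁ _ m₂ _ hne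
    refine Finset.disjoint_left.2 ?_
    intro p hp1 hp2
    rw [Finset.HasAntidiagonal.mem_antidiagonal] at hp1 hp2
    exact hne (hp1 ▸ hp2)
  calc ∑ᶠ p : ℕ × ℕ, F p = ∑ p ∈ S, F p := fsum_eq_sum hmem
    _ = ∑ m ∈ Finset.range (M + 1), ∑ p ∈ Finset.HasAntidiagonal.antidiagonal m, F p :=
        Finset.sum_biUnion hdisj
    _ = ∑ m ∈ Finset.range (M + 1), ∑ i ∈ Finset.range (m + 1), F (i, m - i) := by
        refine Finset.sum_congr rfl (fun m _ => ?_)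
        exact Finset.Nat.sum_antidiagonal_eq_sum_range_succ_mk F m
    _ = ∑ᶠ m : ℕ, ∑ i ∈ Finset.range (m + 1), F (i, m - i) := by
        refine (fsum_eq_sum ?_).symm
        intro m hm
        obtain ⟨i, hi, hne⟩ := Finset.exists_ne_zero_of_sum_ne_zero hm
        have h2 : (i, m - i) ∈ S := hmem _ hne
        rw [hS] at h2
        obtain ⟨m', hm', hp⟩ := Finset.mem_biUnion.1 h2
        rw [Finset.HasAntidiagonal.mem_antidiagonal] at hp
        have h3 : i + (m - i) = m := Nat.add_sub_cancel' (Nat.lt_succ_iff.1 (Finset.mem_range.1 hi))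
        rw [h3] at hp
        rwa [hp]

end Helpers
/-! ### Pointwise summable families of power series -/

section PS

variable {ι κ : Type*}

/-- A family of power series is pointwise summable if each coefficient receives
finitely many nonzero contributions. -/
def Summ (f : ι → FPS) : Prop := ∀ β : MIdx, {i | f i β ≠ 0}.Finite

/-- The componentwise sum of a family of power series. -/
def PS (f : ι → FPS) : FPS := fun β => ∑ᶠ i, f i β

lemma PS_coeff (f : ι → FPS) (β : MIdx) : MvPowerSeries.coeff (R := ℝ) β (PS f) = ∑ᶠ i, f i β := rfl

lemma PS_apply (f : ι → FPS) (β : MIdx) : PS f β = ∑ᶠ i, f i β := rfl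

lemma Summ_single (π : FPS) : Summ (fun γ : MIdx => MvPowerSeries.monomial (R := ℝ) γ (π γ)) := by
  intro β
  apply Set.Finite.subset (Set.finite_singleton β)
  intro γ hγ
  simp only [Set.mem_setOf_eq] at hγ
  by_contra hne
  apply hγ
  have : MvPowerSeries.coeff (R := ℝ) β (MvPowerSeries.monomial (R := ℝ) γ (π γ)) = 0 := by
    rw [MvPowerSeries.coeff_monomial, if_neg (by simpa [eq_comm] using hne)]
  exact this

lemma PS_single (π : FPS) : PS (fun γ : MIdx => MvPowerSeries.monomial (R := ℝ) γ (π γ)) = π := by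
  ext β
  rw [PS_coeff]
  rw [finsum_eq_single _ β]
  · exact MvPowerSeries.coeff_monomial_same β (π β)
  · intro γ hγ
    have : MvPowerSeries.coeff (R := ℝ) β (MvPowerSeries.monomial (R := ℝ) γ (π γ)) = 0 := by
      rw [MvPowerSeries.coeff_monomial, if_neg (by simpa [eq_comm] using hγ)]
    exact this

lemma Summ_mul_right {f : ι → FPS} (hf : Summ f) (g : FPS) : Summ (fun i => f i * g) := by
  classical
  intro β
  apply Set.Finite.subset
    (Set.Finite.biUnion (Finset.HasAntidiagonal.antidiagonal β).finite_toSet (fun p _ => hf p.1))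
  intro i hi
  simp only [Set.mem_setOf_eq] at hi
  rw [show (f i * g) β = MvPowerSeries.coeff (R := ℝ) β (f i * g) from rfl,
    MvPowerSeries.coeff_mul] at hi
  obtain ⟨p, hp, hne⟩ := Finset.exists_ne_zero_of_sum_ne_zero hi
  exact Set.mem_biUnion hp (left_ne_zero_of_mul hne)

lemma PS_mul_right {f : ι → FPS} (hf : Summ f) (g : FPS) :
    PS f * g = PS (fun i => f i * g) := by
  classical
  ext β
  rw [MvPowerSeries.coeff_mul, PS_coeff]
  have step : ∀ p ∈ Finset.HasAntidiagonal.antidiagonal β,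
      MvPowerSeries.coeff (R := ℝ) p.1 (PS f) * MvPowerSeries.coeff (R := ℝ) p.2 g
        = ∑ᶠ i, f i p.1 * g p.2 := by
    intro p _
    rw [show MvPowerSeries.coeff (R := ℝ) p.1 (PS f) = ∑ᶠ i, f i p.1 from rfl]
    exact finsum_mul _ _
  rw [Finset.sum_congr rfl step, sum_finsum_comm _ _ (fun p _ => (hf p.1).subset
    (fun i hi => by simp only [Set.mem_setOf_eq] at hi ⊢; exact left_ne_zero_of_mul hi))]
  refine finsum_congr (fun i => ?_)
  rw [show (f i * g) β = MvPowerSeries.coeff (R := ℝ) β (f i * g) from rfl, MvPowerSeries.coeff_mul]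
  exact Finset.sum_congr rfl (fun p _ => rfl)

lemma PS_congr {f g : ι → FPS} (h : ∀ i, f i = g i) : PS f = PS g := by
  have : f = g := funext h
  rw [this]

lemma Summ_mul_left {f : ι → FPS} (hf : Summ f) (g : FPS) : Summ (fun i => g * f i) := by
  intro β
  apply (Summ_mul_right hf g β).subset
  intro i hi
  simp only [Set.mem_setOf_eq] at hi ⊢
  rwa [mul_comm]

lemma PS_mul_left {f : ι → FPS} (hf : Summ f) (g : FPS) :
    g * PS f = PS (fun i => g * f i) := by
  rw [mul_comm, PS_mul_right hf g]
  exact PS_congr (fun i => mul_comm _ _)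

lemma Summ_mul_prod {f : ι → FPS} {g : κ → FPS} (hf : Summ f) (hg : Summ g) :
    Summ (fun p : ι × κ => f p.1 * g p.2) := by
  classical
  intro β
  apply Set.Finite.subset (Set.Finite.biUnion (Finset.HasAntidiagonal.antidiagonal β).finite_toSet
    (fun p _ => Set.Finite.prod (hf p.1) (hg p.2)))
  intro ij hij
  simp only [Set.mem_setOf_eq] at hij
  rw [show (f ij.1 * g ij.2) β = MvPowerSeries.coeff (R := ℝ) β (f ij.1 * g ij.2) from rfl,
    MvPowerSeries.coeff_mul] at hij
  obtain ⟨p, hp, hne⟩ := Finset.exists_ne_zero_of_sum_ne_zero hij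
  exact Set.mem_biUnion hp ⟨left_ne_zero_of_mul hne, right_ne_zero_of_mul hne⟩

lemma PS_mul_PS {f : ι → FPS} {g : κ → FPS} (hf : Summ f) (hg : Summ g) :
    PS f * PS g = PS (fun p : ι × κ => f p.1 * g p.2) := by
  rw [PS_mul_right hf]
  ext β
  rw [PS_coeff, PS_coeff]
  have step : ∀ i, (f i * PS g) β = ∑ᶠ j, (f i * g j) β := by
    intro i
    rw [show f i * PS g = PS (fun j => f i * g j) from PS_mul_left hg (f i)]
    rfl
  calc ∑ᶠ i, (f i * PS g) β = ∑ᶠ i, ∑ᶠ j, (f i * g j) β := by simp only [step]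
    _ = ∑ᶠ p : ι × κ, (f p.1 * g p.2) β :=
        finsum_finsum_prod _ (Summ_mul_prod hf hg β)

end PS
/-! ### Basic properties of `applyG` -/

section ApplyG

variable {ι : Type*} {Γ : MIdx → MIdx → ℝ}

lemma applyG_coeff (hrow : RowFinite Γ) (π : FPS) (β : MIdx) :
    applyG Γ π β = ∑ γ ∈ (hrow β).toFinset, Γ β γ * π γ := by
  refine fsum_eq_sum ?_
  intro γ hγ
  exact (hrow β).mem_toFinset.2 (left_ne_zero_of_mul hγ)

lemma applyG_add (hrow : RowFinite Γ) (a b : FPS) :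
    applyG Γ (a + b) = applyG Γ a + applyG Γ b := by
  ext β
  rw [MvPowerSeries.coeff_apply, MvPowerSeries.coeff_apply] at *
  show applyG Γ (a + b) β = applyG Γ a β + applyG Γ b β
  rw [applyG_coeff hrow, applyG_coeff hrow, applyG_coeff hrow, ← Finset.sum_add_distrib]
  refine Finset.sum_congr rfl (fun γ _ => ?_)
  show Γ β γ * (a γ + b γ) = _
  ring

lemma applyG_smul (hrow : RowFinite Γ) (r : ℝ) (a : FPS) :
    applyG Γ (r • a) = r • applyG Γ a := by
  ext β
  show applyG Γ (r • a) β = r * applyG Γ a β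
  rw [applyG_coeff hrow, applyG_coeff hrow, Finset.mul_sum]
  refine Finset.sum_congr rfl (fun γ _ => ?_)
  show Γ β γ * (r * a γ) = _
  ring

lemma applyG_sub (hrow : RowFinite Γ) (a b : FPS) :
    applyG Γ (a - b) = applyG Γ a - applyG Γ b := by
  ext β
  show applyG Γ (a - b) β = applyG Γ a β - applyG Γ b β
  rw [applyG_coeff hrow, applyG_coeff hrow, applyG_coeff hrow, ← Finset.sum_sub_distrib]
  refine Finset.sum_congr rfl (fun γ _ => ?_)
  show Γ β γ * (a γ - b γ) = _
  ring

lemma Summ_applyG (hrow : RowFinite Γ) {f : ι → FPS} (hf : Summ f) :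
    Summ (fun i => applyG Γ (f i)) := by
  intro β
  apply Set.Finite.subset (Set.Finite.biUnion ((hrow β).toFinset : Finset MIdx).finite_toSet
    (fun γ _ => hf γ))
  intro i hi
  simp only [Set.mem_setOf_eq] at hi
  rw [applyG_coeff hrow] at hi
  obtain ⟨γ, hγ, hne⟩ := Finset.exists_ne_zero_of_sum_ne_zero hi
  exact Set.mem_biUnion hγ (right_ne_zero_of_mul hne)

lemma applyG_PS (hrow : RowFinite Γ) {f : ι → FPS} (hf : Summ f) :
    applyG Γ (PS f) = PS (fun i => applyG Γ (f i)) := by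
  ext β
  show applyG Γ (PS f) β = ∑ᶠ i, applyG Γ (f i) β
  rw [applyG_coeff hrow]
  have step : ∀ γ ∈ (hrow β).toFinset, Γ β γ * (PS f) γ = ∑ᶠ i, Γ β γ * f i γ := by
    intro γ _
    exact mul_finsum _ _
  rw [Finset.sum_congr rfl step, sum_finsum_comm _ _ (fun γ _ => (hf γ).subset
    (fun i hi => by
      simp only [Set.mem_setOf_eq, Function.mem_support] at hi ⊢
      exact right_ne_zero_of_mul hi))]
  refine finsum_congr (fun i => ?_)
  rw [applyG_coeff hrow]

lemma applyG_pow (hmul : ∀ a b : FPS, applyG Γ (a * b) = applyG Γ a * applyG Γ b)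
    (hone : applyG Γ 1 = 1) (a : FPS) (n : ℕ) :
    applyG Γ (a ^ n) = (applyG Γ a) ^ n := by
  induction n with
  | zero => simpa using hone
  | succ n ih => rw [pow_succ, hmul, ih, pow_succ]

lemma applyG_monomial (Γ : MIdx → MIdx → ℝ) (γ : MIdx) (β : MIdx) :
    applyG Γ (MvPowerSeries.monomial (R := ℝ) γ 1) β = Γ β γ := by
  show (∑ᶠ γ' : MIdx, Γ β γ' * MvPowerSeries.coeff (R := ℝ) γ' (MvPowerSeries.monomial (R := ℝ) γ 1)) = Γ β γ
  rw [finsum_eq_single _ γ]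
  · rw [MvPowerSeries.coeff_monomial_same, mul_one]
  · intro γ' hγ'
    rw [MvPowerSeries.coeff_monomial, if_neg hγ', mul_zero]

end ApplyG
/-! ### The derivation `Dzero`: basic structure -/

section Dlemmas

/-- The shifted index `β + e_k − e_{k+1}`. -/
def sh (β : MIdx) (k : ℕ) : MIdx :=
  β + Finsupp.single (Sum.inl k) 1 - Finsupp.single (Sum.inl (k + 1)) 1

/-- The indices `k` with `β(k+1) ≥ 1`. -/
def Kset (β : MIdx) : Finset ℕ :=
  β.support.preimage (fun k => Sum.inl (k + 1))
    (by intro a _ b _ h; simpa using h)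

lemma mem_Kset {β : MIdx} {k : ℕ} : k ∈ Kset β ↔ β (Sum.inl (k + 1)) ≠ 0 := by
  exact Finset.mem_preimage.trans Finsupp.mem_support_iff

lemma Dzero_apply (π : FPS) (β : MIdx) :
    Dzero π β = ∑ k ∈ Kset β, ((k : ℝ) + 1) * ((β (Sum.inl k) : ℝ) + 1) * π (sh β k) := by
  classical
  have h := Finset.sum_preimage (fun k : ℕ => (Sum.inl (k + 1) : Var)) β.support
    (by intro a _ b _ h; simpa using h)
    (fun j => match j with
     | Sum.inl (k + 1) => ((k : ℝ) + 1) * ((β (Sum.inl k) : ℝ) + 1) *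
         MvPowerSeries.coeff (R := ℝ)
           (β + Finsupp.single (Sum.inl k) 1 - Finsupp.single (Sum.inl (k + 1)) 1) π
     | _ => 0)
    (by intro j hj hrange
        match j with
        | Sum.inl 0 => rfl
        | Sum.inl (k + 1) => exact absurd ⟨k, rfl⟩ hrange
        | Sum.inr n => rfl)
  exact h.symm

lemma sh_spec {β : MIdx} {k : ℕ} (h : β (Sum.inl (k + 1)) ≠ 0) (j : Var) :
    sh β k j + (Finsupp.single (Sum.inl (k + 1)) 1 : MIdx) j
      = β j + (Finsupp.single (Sum.inl k) 1 : MIdx) j := by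
  have h1 : 1 ≤ β (Sum.inl (k + 1)) := Nat.pos_of_ne_zero h
  simp only [sh, Finsupp.coe_add, Finsupp.coe_tsub, Pi.add_apply, Pi.sub_apply,
    Finsupp.single_apply]
  by_cases h2 : (Sum.inl (k + 1) : Var) = j
  · rw [if_pos h2, ← h2]
    have h3 : ¬((Sum.inl k : Var) = Sum.inl (k + 1)) := by simp
    rw [if_neg h3]
    omega
  · rw [if_neg h2]
    split_ifs <;> omega

lemma sh_add {β : MIdx} {k : ℕ} (h : β (Sum.inl (k + 1)) ≠ 0) :
    sh β k + Finsupp.single (Sum.inl (k + 1)) 1 = β + Finsupp.single (Sum.inl k) 1 := by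
  ext j
  have := sh_spec h j
  simpa using this

/-- Weight `Σ_k k β(k)` of the `z_k`-part. -/
def wtl (β : MIdx) : ℕ := β.sum fun j m => match j with | Sum.inl k => k * m | Sum.inr _ => 0

/-- Total degree. -/
def degZ (β : MIdx) : ℕ := β.sum fun _ m => m

lemma wtl_add (a b : MIdx) : wtl (a + b) = wtl a + wtl b := by
  refine Finsupp.sum_add_index ?_ ?_
  · intro j _
    match j with
    | Sum.inl k => simp
    | Sum.inr n => rfl
  · intro j _ m₁ m₂
    match j with
    | Sum.inl k => exact Nat.mul_add k m₁ m₂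
    | Sum.inr n => rfl

lemma degZ_add (a b : MIdx) : degZ (a + b) = degZ a + degZ b := by
  refine Finsupp.sum_add_index ?_ ?_ <;> intro j _ <;> simp

lemma wtl_single_inl (k n : ℕ) : wtl (Finsupp.single (Sum.inl k) n) = k * n := by
  rw [wtl, Finsupp.sum_single_index]; rfl

lemma degZ_single (j : Var) (n : ℕ) : degZ (Finsupp.single j n) = n := by
  rw [degZ, Finsupp.sum_single_index]; rfl

lemma wtl_mono {a b : MIdx} (h : a ≤ b) : wtl a ≤ wtl b := by
  obtain ⟨c, rfl⟩ := le_iff_exists_add.1 h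
  rw [wtl_add]; omega

lemma degZ_mono {a b : MIdx} (h : a ≤ b) : degZ a ≤ degZ b := by
  obtain ⟨c, rfl⟩ := le_iff_exists_add.1 h
  rw [degZ_add]; omega

lemma wtl_sh {β : MIdx} {k : ℕ} (h : β (Sum.inl (k + 1)) ≠ 0) :
    wtl (sh β k) + 1 = wtl β := by
  have h1 := congrArg wtl (sh_add h)
  rw [wtl_add, wtl_add, wtl_single_inl, wtl_single_inl] at h1
  omega

lemma degZ_sh {β : MIdx} {k : ℕ} (h : β (Sum.inl (k + 1)) ≠ 0) :
    degZ (sh β k) = degZ β := by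
  have h1 := congrArg degZ (sh_add h)
  rw [degZ_add, degZ_add, degZ_single, degZ_single] at h1
  omega

lemma inr_sh {β : MIdx} {k : ℕ} (h : β (Sum.inl (k + 1)) ≠ 0) (n : Pos2) :
    sh β k (Sum.inr n) = β (Sum.inr n) := by
  have := sh_spec h (Sum.inr n)
  simpa [Finsupp.single_apply] using this

lemma Dzero_ne_zero {c : FPS} {β : MIdx} (h : Dzero c β ≠ 0) :
    ∃ k, β (Sum.inl (k + 1)) ≠ 0 ∧ c (sh β k) ≠ 0 := by
  rw [Dzero_apply] at h
  obtain ⟨k, hk, hne⟩ := Finset.exists_ne_zero_of_sum_ne_zero h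
  exact ⟨k, mem_Kset.1 hk, right_ne_zero_of_mul hne⟩

lemma Dsupp {c : FPS} (l : ℕ) {δ : MIdx} (h : (Dzero^[l] c) δ ≠ 0) :
    ∃ γ : MIdx, c γ ≠ 0 ∧ wtl γ + l = wtl δ ∧ degZ γ = degZ δ ∧
      ∀ n : Pos2, γ (Sum.inr n) = δ (Sum.inr n) := by
  induction l generalizing δ with
  | zero => exact ⟨δ, h, by simp [Nat.add_zero], rfl, fun n => rfl⟩
  | succ l ih =>
    rw [Function.iterate_succ_apply'] at h
    obtain ⟨k, hk, h2⟩ := Dzero_ne_zero h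
    obtain ⟨γ, hγ, hw, hd, hr⟩ := ih h2
    refine ⟨γ, hγ, ?_, ?_, fun n => ?_⟩
    · have := wtl_sh hk; omega
    · rw [hd, degZ_sh hk]
    · rw [hr n, inr_sh hk]

lemma Dzero_add (a b : FPS) : Dzero (a + b) = Dzero a + Dzero b := by
  ext β
  show Dzero (a + b) β = Dzero a β + Dzero b β
  rw [Dzero_apply, Dzero_apply, Dzero_apply, ← Finset.sum_add_distrib]
  refine Finset.sum_congr rfl (fun k _ => ?_)
  show _ * ((a + b) (sh β k)) = _
  show _ * (a (sh β k) + b (sh β k)) = _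
  ring

lemma Dzero_smul (r : ℝ) (a : FPS) : Dzero (r • a) = r • Dzero a := by
  ext β
  show Dzero (r • a) β = r * Dzero a β
  rw [Dzero_apply, Dzero_apply, Finset.mul_sum]
  refine Finset.sum_congr rfl (fun k _ => ?_)
  show _ * (r * a (sh β k)) = _
  ring

lemma Summ_Dzero {ι : Type*} {f : ι → FPS} (hf : Summ f) : Summ (fun i => Dzero (f i)) := by
  intro β
  apply Set.Finite.subset (Set.Finite.biUnion (Kset β).finite_toSet (fun k _ => hf (sh β k)))
  intro i hi
  simp only [Set.mem_setOf_eq] at hi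
  obtain ⟨k, hk, hne⟩ := Dzero_ne_zero hi
  exact Set.mem_biUnion (mem_Kset.2 hk) hne

lemma Dzero_PS {ι : Type*} {f : ι → FPS} (hf : Summ f) :
    Dzero (PS f) = PS (fun i => Dzero (f i)) := by
  ext β
  show Dzero (PS f) β = ∑ᶠ i, Dzero (f i) β
  rw [Dzero_apply]
  have step : ∀ k ∈ Kset β,
      ((k : ℝ) + 1) * ((β (Sum.inl k) : ℝ) + 1) * (PS f) (sh β k)
        = ∑ᶠ i, ((k : ℝ) + 1) * ((β (Sum.inl k) : ℝ) + 1) * f i (sh β k) := by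
    intro k _
    exact mul_finsum _ _
  rw [Finset.sum_congr rfl step, sum_finsum_comm _ _ (fun k _ => (hf (sh β k)).subset
    (fun i hi => by
      simp only [Set.mem_setOf_eq, Function.mem_support] at hi ⊢
      exact right_ne_zero_of_mul hi))]
  refine finsum_congr (fun i => ?_)
  rw [Dzero_apply]

lemma Summ_Dit {ι : Type*} {f : ι → FPS} (hf : Summ f) (m : ℕ) :
    Summ (fun i => Dzero^[m] (f i)) := by
  induction m with
  | zero => simpa using hf
  | succ m ih =>
    have := Summ_Dzero ih
    intro β
    apply (this β).subset
    intro i hi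
    simp only [Set.mem_setOf_eq, Function.iterate_succ_apply'] at hi ⊢
    exact hi

lemma Dit_PS {ι : Type*} {f : ι → FPS} (hf : Summ f) (m : ℕ) :
    Dzero^[m] (PS f) = PS (fun i => Dzero^[m] (f i)) := by
  induction m with
  | zero => simp
  | succ m ih =>
    rw [Function.iterate_succ_apply', ih, Dzero_PS (Summ_Dit hf m)]
    refine PS_congr (fun i => ?_)
    rw [Function.iterate_succ_apply']

end Dlemmas
/-! ### Leibniz rule for `Dzero` -/

section Leibniz

/-- The reverse shift `γ + e_{k+1} − e_k`. -/
def unsh (γ : MIdx) (k : ℕ) : MIdx :=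
  γ + Finsupp.single (Sum.inl (k + 1)) 1 - Finsupp.single (Sum.inl k) 1

lemma unsh_spec {γ : MIdx} {k : ℕ} (h : γ (Sum.inl k) ≠ 0) (j : Var) :
    unsh γ k j + (Finsupp.single (Sum.inl k) 1 : MIdx) j
      = γ j + (Finsupp.single (Sum.inl (k + 1)) 1 : MIdx) j := by
  have h1 : 1 ≤ γ (Sum.inl k) := Nat.pos_of_ne_zero h
  simp only [unsh, Finsupp.coe_add, Finsupp.coe_tsub, Pi.add_apply, Pi.sub_apply,
    Finsupp.single_apply]
  by_cases h2 : (Sum.inl k : Var) = j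
  · rw [if_pos h2, ← h2]
    have h3 : ¬((Sum.inl (k + 1) : Var) = Sum.inl k) := by simp
    rw [if_neg h3]
    omega
  · rw [if_neg h2]
    split_ifs <;> omega

lemma sh_apply_k {γ : MIdx} {k : ℕ} (h : γ (Sum.inl (k + 1)) ≠ 0) :
    sh γ k (Sum.inl k) = γ (Sum.inl k) + 1 := by
  have := sh_spec h (Sum.inl k)
  have h1 : ((Sum.inl (k + 1) : Var) = Sum.inl k) ↔ False := by simp
  simpa [Finsupp.single_apply, h1] using this

lemma antidiag_apply {β : MIdx} {p : MIdx × MIdx} (h : p ∈ Finset.HasAntidiagonal.antidiagonal β) (j : Var) :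
    p.1 j + p.2 j = β j := by
  have h1 : p.1 + p.2 = β := Finset.HasAntidiagonal.mem_antidiagonal.1 h
  rw [← h1]; rfl

lemma mem_antidiag_of_apply {β : MIdx} {p : MIdx × MIdx} (h : ∀ j, p.1 j + p.2 j = β j) :
    p ∈ Finset.HasAntidiagonal.antidiagonal β := by
  rw [Finset.HasAntidiagonal.mem_antidiagonal]
  ext j
  exact h j

/-- Key bijection step for the Leibniz rule. -/
lemma claimA (a b : FPS) {β : MIdx} {k : ℕ} (hk : β (Sum.inl (k + 1)) ≠ 0) :
    ∑ q ∈ Finset.HasAntidiagonal.antidiagonal (sh β k), (q.1 (Sum.inl k) : ℝ) * (a q.1 * b q.2)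
      = ∑ p ∈ Finset.HasAntidiagonal.antidiagonal β,
          (if p.1 (Sum.inl (k + 1)) ≠ 0
            then ((p.1 (Sum.inl k) : ℝ) + 1) * (a (sh p.1 k) * b p.2) else 0) := by
  classical
  rw [← Finset.sum_filter]
  rw [← Finset.sum_filter_of_ne (p := fun q : MIdx × MIdx => q.1 (Sum.inl k) ≠ 0)
    (by intro q _ hq
        intro h0
        apply hq
        rw [h0]
        simp)]
  refine (Finset.sum_nbij' (fun p => (sh p.1 k, p.2)) (fun q => (unsh q.1 k, q.2))
    ?_ ?_ ?_ ?_ ?_).symm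
  · -- maps forward
    intro p hp
    simp only [Finset.mem_filter] at hp ⊢
    obtain ⟨hp1, hp2⟩ := hp
    have hspec := fun j => sh_spec hp2 j
    have hspecβ := fun j => sh_spec hk j
    have hsum := fun j => antidiag_apply hp1 j
    constructor
    · refine mem_antidiag_of_apply (fun j => ?_)
      dsimp only
      have e1 := hspec j; have e2 := hspecβ j; have e3 := hsum j
      omega
    · rw [sh_apply_k hp2]
      omega
  · -- maps backward
    intro q hq
    simp only [Finset.mem_filter] at hq ⊢
    obtain ⟨hq1, hq2⟩ := hq
    have hspec := fun j => unsh_spec hq2 j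
    have hspecβ := fun j => sh_spec hk j
    have hsum := fun j => antidiag_apply hq1 j
    constructor
    · refine mem_antidiag_of_apply (fun j => ?_)
      dsimp only
      have e1 := hspec j; have e2 := hspecβ j; have e3 := hsum j
      omega
    · have e1 := hspec (Sum.inl (k + 1))
      have h1 : ((Sum.inl k : Var) = Sum.inl (k + 1)) ↔ False := by simp
      simp only [Finsupp.single_apply, h1, if_false, if_pos rfl, if_true] at e1
      omega
  · -- left inverse
    intro p hp
    simp only [Finset.mem_filter] at hp
    obtain ⟨_, hp2⟩ := hp
    have hsh : sh p.1 k (Sum.inl k) ≠ 0 := by rw [sh_apply_k hp2]; omega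
    have hspec := fun j => sh_spec hp2 j
    have hspec2 := fun j => unsh_spec hsh j
    have key : unsh (sh p.1 k) k = p.1 := by
      ext j
      have e1 := hspec j; have e2 := hspec2 j
      omega
    rw [Prod.ext_iff]
    exact ⟨key, rfl⟩
  · -- right inverse
    intro q hq
    simp only [Finset.mem_filter] at hq
    obtain ⟨_, hq2⟩ := hq
    have hun : unsh q.1 k (Sum.inl (k + 1)) ≠ 0 := by
      have e1 := unsh_spec hq2 (Sum.inl (k + 1))
      have h1 : ((Sum.inl k : Var) = Sum.inl (k + 1)) ↔ False := by simp
      simp only [Finsupp.single_apply, h1, if_false, if_pos rfl, if_true] at e1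
      omega
    have hspec := fun j => unsh_spec hq2 j
    have hspec2 := fun j => sh_spec hun j
    have key : sh (unsh q.1 k) k = q.1 := by
      ext j
      have e1 := hspec j; have e2 := hspec2 j
      omega
    rw [Prod.ext_iff]
    exact ⟨key, rfl⟩
  · -- terms agree
    intro p hp
    simp only [Finset.mem_filter] at hp
    obtain ⟨_, hp2⟩ := hp
    have : sh p.1 k (Sum.inl k) = p.1 (Sum.inl k) + 1 := sh_apply_k hp2
    rw [this]
    push_cast
    ring

lemma sum_antidiag_swap (β : MIdx) (f : MIdx × MIdx → ℝ) :
    ∑ p ∈ Finset.HasAntidiagonal.antidiagonal β, f p = ∑ p ∈ Finset.HasAntidiagonal.antidiagonal β, f p.swap := by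
  rw [← Finset.HasAntidiagonal.map_swap_antidiagonal, Finset.sum_map]
  simp

lemma Dzero_mul (a b : FPS) : Dzero (a * b) = Dzero a * b + a * Dzero b := by
  classical
  ext β
  rw [MvPowerSeries.coeff_apply, map_add, MvPowerSeries.coeff_mul, MvPowerSeries.coeff_mul]
  show Dzero (a * b) β = _
  -- notation for the two normal-form summands
  set F₁ : ℕ → MIdx × MIdx → ℝ := fun k p =>
    if p.1 (Sum.inl (k + 1)) ≠ 0
      then ((p.1 (Sum.inl k) : ℝ) + 1) * (a (sh p.1 k) * b p.2) else 0 with hF₁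
  set F₂ : ℕ → MIdx × MIdx → ℝ := fun k p =>
    if p.1 (Sum.inl (k + 1)) ≠ 0
      then ((p.1 (Sum.inl k) : ℝ) + 1) * (b (sh p.1 k) * a p.2) else 0 with hF₂
  -- Left-hand side in normal form
  have hLHS : Dzero (a * b) β = ∑ k ∈ Kset β, ((k : ℝ) + 1) *
      ((∑ p ∈ Finset.HasAntidiagonal.antidiagonal β, F₁ k p) + (∑ p ∈ Finset.HasAntidiagonal.antidiagonal β, F₂ k p)) := by
    rw [Dzero_apply]
    refine Finset.sum_congr rfl (fun k hk => ?_)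
    have hk' : β (Sum.inl (k + 1)) ≠ 0 := mem_Kset.1 hk
    have step1 : (a * b) (sh β k) = ∑ q ∈ Finset.HasAntidiagonal.antidiagonal (sh β k), a q.1 * b q.2 := by
      rw [show (a * b) (sh β k) = MvPowerSeries.coeff (R := ℝ) (sh β k) (a * b) from rfl,
        MvPowerSeries.coeff_mul]
      rfl
    have step2 : ((β (Sum.inl k) : ℝ) + 1) * ∑ q ∈ Finset.HasAntidiagonal.antidiagonal (sh β k), a q.1 * b q.2
        = (∑ q ∈ Finset.HasAntidiagonal.antidiagonal (sh β k), (q.1 (Sum.inl k) : ℝ) * (a q.1 * b q.2))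
          + ∑ q ∈ Finset.HasAntidiagonal.antidiagonal (sh β k), (q.2 (Sum.inl k) : ℝ) * (a q.1 * b q.2) := by
      rw [Finset.mul_sum, ← Finset.sum_add_distrib]
      refine Finset.sum_congr rfl (fun q hq => ?_)
      have h1 : q.1 (Sum.inl k) + q.2 (Sum.inl k) = sh β k (Sum.inl k) := antidiag_apply hq _
      have h2 : sh β k (Sum.inl k) = β (Sum.inl k) + 1 := sh_apply_k hk'
      have h3 : (q.1 (Sum.inl k) : ℝ) + (q.2 (Sum.inl k) : ℝ)
          = (β (Sum.inl k) : ℝ) + 1 := by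
        rw [h2] at h1
        exact_mod_cast h1
      rw [← h3]
      ring
    have step3 : ∑ q ∈ Finset.HasAntidiagonal.antidiagonal (sh β k), (q.2 (Sum.inl k) : ℝ) * (a q.1 * b q.2)
        = ∑ q ∈ Finset.HasAntidiagonal.antidiagonal (sh β k), (q.1 (Sum.inl k) : ℝ) * (b q.1 * a q.2) := by
      rw [sum_antidiag_swap (sh β k) (fun q => (q.2 (Sum.inl k) : ℝ) * (a q.1 * b q.2))]
      refine Finset.sum_congr rfl (fun q _ => ?_)
      simp only [Prod.fst_swap, Prod.snd_swap]
      ring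
    rw [mul_assoc, step1, step2, step3, claimA a b hk', claimA b a hk']
  rw [hLHS]
  -- Right-hand side in normal form
  have hRa : ∀ p : MIdx × MIdx, p ∈ Finset.HasAntidiagonal.antidiagonal β →
      MvPowerSeries.coeff (R := ℝ) p.1 (Dzero a) * MvPowerSeries.coeff (R := ℝ) p.2 b
        = ∑ k ∈ Kset β, ((k : ℝ) + 1) * F₁ k p := by
    intro p hp
    have hsub : Kset p.1 ⊆ Kset β := by
      intro k hk
      rw [mem_Kset] at hk ⊢
      have := antidiag_apply hp (Sum.inl (k + 1))
      omega
    rw [show MvPowerSeries.coeff (R := ℝ) p.1 (Dzero a) = Dzero a p.1 from rfl, Dzero_apply,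
      Finset.sum_mul]
    rw [← Finset.sum_subset hsub (f := fun k : ℕ => ((k : ℝ) + 1) * F₁ k p) (by
      intro k _ hk
      rw [mem_Kset, not_not] at hk
      simp [hF₁, hk])]
    refine Finset.sum_congr rfl (fun k hk => ?_)
    rw [hF₁]
    simp only []
    rw [if_pos (mem_Kset.1 hk)]
    show ((k : ℝ) + 1) * ((p.1 (Sum.inl k) : ℝ) + 1) * a (sh p.1 k)
        * MvPowerSeries.coeff (R := ℝ) p.2 b = _
    rw [MvPowerSeries.coeff_apply]
    ring
  have hRb : ∀ p : MIdx × MIdx, p ∈ Finset.HasAntidiagonal.antidiagonal β →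
      MvPowerSeries.coeff (R := ℝ) p.1 a * MvPowerSeries.coeff (R := ℝ) p.2 (Dzero b)
        = ∑ k ∈ Kset β, ((k : ℝ) + 1) * F₂ k p.swap := by
    intro p hp
    have hsub : Kset p.2 ⊆ Kset β := by
      intro k hk
      rw [mem_Kset] at hk ⊢
      have := antidiag_apply hp (Sum.inl (k + 1))
      omega
    rw [show MvPowerSeries.coeff (R := ℝ) p.2 (Dzero b) = Dzero b p.2 from rfl, Dzero_apply,
      Finset.mul_sum]
    rw [← Finset.sum_subset hsub (f := fun k : ℕ => ((k : ℝ) + 1) * F₂ k p.swap) (by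
      intro k _ hk
      rw [mem_Kset, not_not] at hk
      simp [hF₂, hk])]
    refine Finset.sum_congr rfl (fun k hk => ?_)
    rw [hF₂]
    simp only [Prod.fst_swap, Prod.snd_swap]
    rw [if_pos (mem_Kset.1 hk)]
    rw [MvPowerSeries.coeff_apply]
    ring
  rw [Finset.sum_congr rfl hRa, Finset.sum_congr rfl hRb, Finset.sum_comm, Finset.sum_comm
    (s := Finset.HasAntidiagonal.antidiagonal β) (t := Kset β), ← Finset.sum_add_distrib]
  refine Finset.sum_congr rfl (fun k hk => ?_)
  rw [mul_add, Finset.mul_sum, Finset.mul_sum]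
  congr 1
  rw [sum_antidiag_swap β (fun p => ((k : ℝ) + 1) * F₂ k p.swap)]
  simp only [Prod.swap_swap]

end Leibniz
/-! ### `Dzero` on constants, variables, and iterated Leibniz -/

section Dmore

lemma Dzero_zero : Dzero (0 : FPS) = 0 := by
  ext β
  show Dzero (0 : FPS) β = 0
  rw [Dzero_apply]
  refine Finset.sum_eq_zero (fun k _ => ?_)
  show _ * (0 : FPS) (sh β k) = 0
  show _ * (0 : ℝ) = 0
  rw [mul_zero]

lemma Dzero_sum {ι : Type*} (s : Finset ι) (f : ι → FPS) :
    Dzero (∑ i ∈ s, f i) = ∑ i ∈ s, Dzero (f i) := by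
  classical
  induction s using Finset.induction with
  | empty => simpa using Dzero_zero
  | insert _ _ hni ih =>
    rw [Finset.sum_insert hni, Dzero_add, ih, Finset.sum_insert hni]

lemma Dzero_nsmul (n : ℕ) (a : FPS) : Dzero (n • a) = n • Dzero a := by
  rw [← Nat.cast_smul_eq_nsmul ℝ, Dzero_smul, Nat.cast_smul_eq_nsmul]

lemma Dzero_one : Dzero (1 : FPS) = 0 := by
  classical
  ext β
  show Dzero (1 : FPS) β = 0
  rw [Dzero_apply]
  refine Finset.sum_eq_zero (fun k hk => ?_)
  have hk' : β (Sum.inl (k + 1)) ≠ 0 := mem_Kset.1 hk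
  have h1 : sh β k ≠ 0 := by
    intro h
    have h2 := sh_apply_k hk'
    rw [h] at h2
    simp at h2
  show _ * (1 : FPS) (sh β k) = 0
  rw [show (1 : FPS) (sh β k) = MvPowerSeries.coeff (R := ℝ) (sh β k) 1 from rfl,
    MvPowerSeries.coeff_one, if_neg h1, mul_zero]

lemma Dzero_zk (j : ℕ) : Dzero (zk j) = ((j : ℝ) + 1) • zk (j + 1) := by
  classical
  ext β
  rw [MvPowerSeries.coeff_apply, map_smul]
  show Dzero (zk j) β = ((j : ℝ) + 1) * MvPowerSeries.coeff (R := ℝ) β (zk (j + 1))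
  rw [Dzero_apply]
  rw [show MvPowerSeries.coeff (R := ℝ) β (zk (j + 1))
      = if β = Finsupp.single (Sum.inl (j + 1)) 1 then 1 else 0 from by
    rw [zk, MvPowerSeries.coeff_X]]
  by_cases hβ : β = Finsupp.single (Sum.inl (j + 1)) 1
  · rw [if_pos hβ]
    subst hβ
    have hKs : Kset (Finsupp.single (Sum.inl (j + 1)) 1) = {j} := by
      ext k
      rw [mem_Kset, Finset.mem_singleton, Finsupp.single_apply]
      constructor
      · intro h
        by_contra hne
        rw [if_neg (by simpa using fun h' : j + 1 = k + 1 => hne (by omega))] at h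
        exact h rfl
      · intro h
        subst h
        simp
    rw [hKs, Finset.sum_singleton]
    have hval : (Finsupp.single (Sum.inl (j + 1)) 1 : MIdx) (Sum.inl j) = 0 := by
      rw [Finsupp.single_apply, if_neg (by simp)]
    have hk' : (Finsupp.single (Sum.inl (j + 1)) 1 : MIdx) (Sum.inl (j + 1)) ≠ 0 := by simp
    have hsh : sh (Finsupp.single (Sum.inl (j + 1)) 1) j = Finsupp.single (Sum.inl j) 1 := by
      ext j'
      have e1 := sh_spec hk' j'
      omega
    rw [hval, hsh]
    rw [show (zk j) (Finsupp.single (Sum.inl j) 1) = MvPowerSeries.coeff (R := ℝ) _ (zk j) from rfl,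
      zk, MvPowerSeries.coeff_X, if_pos rfl]
    norm_num
  · rw [if_neg hβ, mul_zero]
    refine Finset.sum_eq_zero (fun k hk => ?_)
    have hk' : β (Sum.inl (k + 1)) ≠ 0 := mem_Kset.1 hk
    have hz : (zk j) (sh β k) = 0 := by
      rw [show (zk j) (sh β k) = MvPowerSeries.coeff (R := ℝ) _ (zk j) from rfl, zk,
        MvPowerSeries.coeff_X]
      refine if_neg ?_
      intro heq
      have hpt : ∀ j' : Var, sh β k j' = (Finsupp.single (Sum.inl j) 1 : MIdx) j' := by
        intro j'
        rw [heq]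
      have hkj : k = j := by
        by_contra hne
        have e2 := hpt (Sum.inl k)
        rw [sh_apply_k hk'] at e2
        rw [Finsupp.single_apply, if_neg (by simpa using fun h : j = k => hne h.symm)] at e2
        omega
      subst hkj
      apply hβ
      ext j'
      have e1 := sh_spec hk' j'
      have e2 := hpt j'
      omega
    rw [hz, mul_zero]

lemma Dit_mul (a b : FPS) (n : ℕ) :
    Dzero^[n] (a * b) = ∑ k ∈ Finset.range n.succ,
      n.choose k • (Dzero^[n - k] a * Dzero^[k] b) := by
  induction n with
  | zero => simp
  | succ n IH =>
    calc
      Dzero^[n + 1] (a * b) =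
          Dzero (∑ k ∈ Finset.range n.succ,
              n.choose k • (Dzero^[n - k] a * Dzero^[k] b)) := by
        rw [Function.iterate_succ_apply', IH]
      _ = (∑ k ∈ Finset.range n.succ,
            n.choose k • (Dzero^[n - k + 1] a * Dzero^[k] b)) +
          ∑ k ∈ Finset.range n.succ,
            n.choose k • (Dzero^[n - k] a * Dzero^[k + 1] b) := by
        rw [Dzero_sum]
        simp_rw [Dzero_nsmul, Dzero_mul, Function.iterate_succ_apply',
          smul_add, Finset.sum_add_distrib]
      _ = (∑ k ∈ Finset.range n.succ,
                n.choose k.succ • (Dzero^[n - k] a * Dzero^[k + 1] b)) +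
              1 • (Dzero^[n + 1] a * Dzero^[0] b) +
            ∑ k ∈ Finset.range n.succ, n.choose k • (Dzero^[n - k] a * Dzero^[k + 1] b) :=
        ?_
      _ = ((∑ k ∈ Finset.range n.succ, n.choose k • (Dzero^[n - k] a * Dzero^[k + 1] b)) +
              ∑ k ∈ Finset.range n.succ,
                n.choose k.succ • (Dzero^[n - k] a * Dzero^[k + 1] b)) +
            1 • (Dzero^[n + 1] a * Dzero^[0] b) := by
        rw [add_comm, add_assoc]
      _ = (∑ i ∈ Finset.range n.succ,
              (n + 1).choose (i + 1) • (Dzero^[n + 1 - (i + 1)] a * Dzero^[i + 1] b)) +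
            1 • (Dzero^[n + 1] a * Dzero^[0] b) := by
        simp_rw [Nat.choose_succ_succ, Nat.succ_sub_succ, add_smul, Finset.sum_add_distrib]
      _ = ∑ k ∈ Finset.range n.succ.succ,
            n.succ.choose k • (Dzero^[n.succ - k] a * Dzero^[k] b) := by
        rw [Finset.sum_range_succ' _ n.succ, Nat.choose_zero_right, tsub_zero]
    congr
    refine (Finset.sum_range_succ' _ _).trans (congr_arg₂ (· + ·) ?_ ?_)
    · rw [Finset.sum_range_succ, Nat.choose_succ_self, zero_smul, add_zero]
      refine Finset.sum_congr rfl fun k hk => ?_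
      rw [Finset.mem_range] at hk
      congr
      omega
    · rw [Nat.choose_zero_right, tsub_zero]

lemma Dit_zk (k m : ℕ) :
    Dzero^[m] (zk k) = ((m.factorial * (k + m).choose k : ℕ) : ℝ) • zk (k + m) := by
  induction m with
  | zero => simp
  | succ m ih =>
    rw [Function.iterate_succ_apply', ih, Dzero_smul, Dzero_zk]
    rw [smul_smul]
    have h1 : (k + m).choose k * k.factorial * m.factorial = (k + m).factorial := by
      have := Nat.choose_mul_factorial_mul_factorial (Nat.le_add_right k m)
      simpa using this
    have h2 : (k + m + 1).choose k * k.factorial * (m + 1).factorial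
        = (k + m + 1).factorial := by
      have := Nat.choose_mul_factorial_mul_factorial (show k ≤ k + m + 1 by omega)
      simpa [show k + m + 1 - k = m + 1 by omega] using this
    have h3 : (k + m + 1).factorial = (k + m).factorial * (k + m + 1) := by
      rw [Nat.factorial_succ]; ring
    have hkfac : 0 < k.factorial := Nat.factorial_pos k
    have harith : (m + 1).factorial * (k + m + 1).choose k
        = m.factorial * (k + m).choose k * (k + m + 1) := by
      refine Nat.eq_of_mul_eq_mul_right hkfac ?_
      calc (m + 1).factorial * (k + m + 1).choose k * k.factorial
          = (k + m + 1).choose k * k.factorial * (m + 1).factorial := by ring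
        _ = (k + m + 1).factorial := h2
        _ = (k + m).factorial * (k + m + 1) := h3
        _ = ((k + m).choose k * k.factorial * m.factorial) * (k + m + 1) := by rw [h1]
        _ = m.factorial * (k + m).choose k * (k + m + 1) * k.factorial := by ring
    rw [show k + (m + 1) = k + m + 1 from rfl, harith]
    congr 1
    push_cast
    ring
  
end Dmore
/-! ### The substitution-type map `E` -/

section Emap

variable (q : FPS)

/-- `E c := Σ_m (1/m!) q^m (D⁰)^m c`, componentwise. -/
def Emap (c : FPS) : FPS :=
  PS (fun m : ℕ => ((m.factorial : ℝ))⁻¹ • (q ^ m * Dzero^[m] c))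

lemma smul_app (r : ℝ) (x : FPS) (β : MIdx) : (r • x) β = r * x β := rfl

lemma Summ_Efam (c : FPS) :
    Summ (fun m : ℕ => ((m.factorial : ℝ))⁻¹ • (q ^ m * Dzero^[m] c)) := by
  classical
  intro β
  apply Set.Finite.subset (Set.finite_Iic (wtl β))
  intro m hm
  simp only [Set.mem_setOf_eq, smul_app] at hm
  have h1 : (q ^ m * Dzero^[m] c) β ≠ 0 := right_ne_zero_of_mul hm
  rw [show (q ^ m * Dzero^[m] c) β = MvPowerSeries.coeff (R := ℝ) β (q ^ m * Dzero^[m] c) from rfl,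
    MvPowerSeries.coeff_mul] at h1
  obtain ⟨p, hp, hne⟩ := Finset.exists_ne_zero_of_sum_ne_zero h1
  have h2 : (Dzero^[m] c) p.2 ≠ 0 := right_ne_zero_of_mul hne
  obtain ⟨γ, _, hw, _, _⟩ := Dsupp m h2
  have h3 : p.2 ≤ β := by
    refine le_iff_exists_add.2 ⟨p.1, ?_⟩
    rw [← Finset.HasAntidiagonal.mem_antidiagonal.1 hp, add_comm]
  have := wtl_mono h3
  simp only [Set.mem_Iic]
  omega

lemma Emap_coeff (c : FPS) (β : MIdx) :
    Emap q c β = ∑ᶠ m : ℕ, ((m.factorial : ℝ))⁻¹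
      * MvPowerSeries.coeff (R := ℝ) β (q ^ m * Dzero^[m] c) := rfl

lemma Emap_one : Emap q 1 = 1 := by
  ext β
  show Emap q 1 β = (1 : FPS) β
  rw [Emap_coeff, finsum_eq_single _ 0]
  · simp [MvPowerSeries.coeff_apply]
  · intro m hm
    obtain ⟨m', rfl⟩ := Nat.exists_eq_succ_of_ne_zero hm
    rw [Function.iterate_succ_apply, Dzero_one,
      Function.iterate_fixed Dzero_zero]
    simp

lemma Dit_smul (r : ℝ) (x : FPS) (m : ℕ) : Dzero^[m] (r • x) = r • Dzero^[m] x := by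
  induction m with
  | zero => simp
  | succ m ih => rw [Function.iterate_succ_apply', ih, Dzero_smul, Function.iterate_succ_apply']

lemma Dit_zero (m : ℕ) : Dzero^[m] (0 : FPS) = 0 := Function.iterate_fixed Dzero_zero m

lemma Emap_zero : Emap q 0 = 0 := by
  ext β
  show Emap q 0 β = 0
  rw [Emap_coeff]
  refine finsum_eq_zero_of_forall_eq_zero (fun m => ?_)
  rw [Dit_zero]
  simp

lemma Emap_smul (r : ℝ) (x : FPS) : Emap q (r • x) = r • Emap q x := by
  ext β
  rw [MvPowerSeries.coeff_apply, MvPowerSeries.coeff_apply, smul_app, Emap_coeff, Emap_coeff,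
    mul_finsum (fun m : ℕ => ((m.factorial : ℝ))⁻¹
        * MvPowerSeries.coeff (R := ℝ) β (q ^ m * Dzero^[m] x)) r]
  refine finsum_congr (fun m => ?_)
  rw [Dit_smul, mul_smul_comm, MvPowerSeries.coeff_apply, MvPowerSeries.coeff_apply, smul_app]
  ring

lemma fact_ne (n : ℕ) : ((n.factorial : ℝ)) ≠ 0 := Nat.cast_ne_zero.2 (Nat.factorial_ne_zero n)

lemma choose_inv_fact {m j : ℕ} (hj : j ≤ m) :
    ((m.factorial : ℝ))⁻¹ * ((m.choose (m - j) : ℕ) : ℝ)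
      = ((j.factorial : ℝ))⁻¹ * (((m - j).factorial : ℝ))⁻¹ := by
  have hn : (m.choose (m - j)) * (m - j).factorial * j.factorial = m.factorial := by
    have h := Nat.choose_mul_factorial_mul_factorial (show m - j ≤ m by omega)
    rwa [show m - (m - j) = j by omega] at h
  rw [Nat.choose_symm hj] at hn
  have hr : ((m.choose j : ℕ) : ℝ) * ((m - j).factorial : ℝ) * (j.factorial : ℝ)
      = (m.factorial : ℝ) := by exact_mod_cast hn
  rw [Nat.choose_symm hj]
  field_simp
  linarith [hr]

lemma Emap_mul (a b : FPS) : Emap q (a * b) = Emap q a * Emap q b := by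
  classical
  rw [show Emap q a * Emap q b = PS (fun p : ℕ × ℕ =>
      ((p.1.factorial : ℝ))⁻¹ • (q ^ p.1 * Dzero^[p.1] a)
        * ((p.2.factorial : ℝ))⁻¹ • (q ^ p.2 * Dzero^[p.2] b)) from
    PS_mul_PS (Summ_Efam q a) (Summ_Efam q b)]
  ext β
  rw [MvPowerSeries.coeff_apply, MvPowerSeries.coeff_apply, PS_apply, Emap_coeff]
  have hsupp : (Function.support (fun p : ℕ × ℕ =>
      ((((p.1.factorial : ℝ))⁻¹ • (q ^ p.1 * Dzero^[p.1] a)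
        * ((p.2.factorial : ℝ))⁻¹ • (q ^ p.2 * Dzero^[p.2] b)) β))).Finite :=
    Summ_mul_prod (Summ_Efam q a) (Summ_Efam q b) β
  rw [finsum_nat_pairs _ hsupp]
  refine finsum_congr (fun m => ?_)
  -- fixed m: finite sums over `range (m+1)`
  have hD : ((m.factorial : ℝ))⁻¹ * MvPowerSeries.coeff (R := ℝ) β (q ^ m * Dzero^[m] (a * b))
      = ∑ k ∈ Finset.range (m + 1), ((m.factorial : ℝ))⁻¹ * ((m.choose k : ℕ) : ℝ)
          * MvPowerSeries.coeff (R := ℝ) β (q ^ m * (Dzero^[m - k] a * Dzero^[k] b)) := by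
    rw [Dit_mul a b m, Finset.mul_sum, map_sum, Finset.mul_sum]
    refine Finset.sum_congr rfl (fun k _ => ?_)
    rw [mul_smul_comm, map_nsmul, nsmul_eq_mul]
    ring
  rw [hD, ← Finset.sum_range_reflect]
  refine Finset.sum_congr rfl (fun i hi => ?_)
  rw [Finset.mem_range] at hi
  have hi' : i ≤ m := by omega
  rw [show m + 1 - 1 - i = m - i from by omega]
  rw [show m - (m - i) = i from by omega]
  dsimp only
  have hterm : ((i.factorial : ℝ))⁻¹ • (q ^ i * Dzero^[i] a)
      * (((m - i).factorial : ℝ))⁻¹ • (q ^ (m - i) * Dzero^[m - i] b)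
      = (((i.factorial : ℝ))⁻¹ * (((m - i).factorial : ℝ))⁻¹)
        • (q ^ m * (Dzero^[i] a * Dzero^[m - i] b)) := by
    rw [smul_mul_assoc, mul_smul_comm, smul_smul,
      show q ^ i * Dzero^[i] a * (q ^ (m - i) * Dzero^[m - i] b)
        = q ^ (i + (m - i)) * (Dzero^[i] a * Dzero^[m - i] b) from by rw [pow_add]; ring,
      show i + (m - i) = m from by omega]
  rw [hterm, smul_app, choose_inv_fact hi']
  rfl

lemma Emap_pow (a : FPS) (n : ℕ) : Emap q (a ^ n) = (Emap q a) ^ n := by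
  induction n with
  | zero => simpa using Emap_one q
  | succ n ih => rw [pow_succ, Emap_mul, ih, pow_succ]

lemma Emap_zk (k : ℕ) : Emap q (zk k) = gammaZk q k := by
  ext β
  rw [MvPowerSeries.coeff_apply, MvPowerSeries.coeff_apply, Emap_coeff]
  rw [show gammaZk q k β = ∑ᶠ l : ℕ, (((k + l).choose k : ℝ))
    * MvPowerSeries.coeff (R := ℝ) β (q ^ l * zk (k + l)) from rfl]
  refine finsum_congr (fun m => ?_)
  rw [Dit_zk, mul_smul_comm, map_smul, smul_eq_mul]
  rw [← mul_assoc]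
  congr 1
  push_cast
  rw [← mul_assoc, inv_mul_cancel₀ (fact_ne m), one_mul]

end Emap
/-! ### The key identity: `Γ` acts on `ℝ[[z_k]]` like `E` -/

section Key

variable (q : FPS)

lemma applyG_zero {Γ : MIdx → MIdx → ℝ} : applyG Γ (0 : FPS) = 0 := by
  ext β
  show applyG Γ (0 : FPS) β = 0
  refine finsum_eq_zero_of_forall_eq_zero (fun γ => ?_)
  rw [map_zero, mul_zero]

lemma key_monomial {Γ : MIdx → MIdx → ℝ}
    (hmul : ∀ a b : FPS, applyG Γ (a * b) = applyG Γ a * applyG Γ b)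
    (hone : applyG Γ 1 = 1) (hzk : ∀ k : ℕ, applyG Γ (zk k) = gammaZk q k) :
    ∀ γ : MIdx, (∀ n : Pos2, γ (Sum.inr n) = 0) →
      applyG Γ (MvPowerSeries.monomial (R := ℝ) γ 1) = Emap q (MvPowerSeries.monomial (R := ℝ) γ 1) := by
  intro γ
  induction γ using Finsupp.induction with
  | zero =>
    intro _
    rw [MvPowerSeries.monomial_zero_one, hone, Emap_one]
  | single_add j n τ hjτ hn ih =>
    intro hγ
    have hτ : ∀ n' : Pos2, τ (Sum.inr n') = 0 := by
      intro n'
      have h := hγ n'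
      rw [Finsupp.add_apply] at h
      omega
    obtain ⟨k⟩ | ⟨n₀⟩ := j
    case inr =>
      exfalso
      have h := hγ n₀
      rw [Finsupp.add_apply, Finsupp.single_apply, if_pos rfl] at h
      omega
    have hsplit : MvPowerSeries.monomial (R := ℝ) (Finsupp.single (Sum.inl k : Var) n + τ) (1 : ℝ)
        = (zk k) ^ n * MvPowerSeries.monomial (R := ℝ) τ 1 := by
      rw [zk, MvPowerSeries.X_pow_eq, MvPowerSeries.monomial_mul_monomial, one_mul]
    rw [hsplit, hmul, Emap_mul, applyG_pow hmul hone, hzk, ← Emap_zk q, ← Emap_pow,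
      ih hτ]

lemma finite_le (B : MIdx) : {γ : MIdx | γ ≤ B}.Finite := by
  classical
  apply Set.Finite.subset ((Finset.HasAntidiagonal.antidiagonal B).finite_toSet.image Prod.fst)
  intro γ hγ
  simp only [Set.mem_setOf_eq] at hγ
  obtain ⟨δ, hδ⟩ := le_iff_exists_add.1 hγ
  exact ⟨(γ, δ), Finset.mem_coe.2 (Finset.HasAntidiagonal.mem_antidiagonal.2 hδ.symm), rfl⟩

lemma apply_le_degZ (γ : MIdx) (j : Var) : γ j ≤ degZ γ := by
  by_cases hj : j ∈ γ.support
  · exact Finset.single_le_sum (f := fun j' => γ j') (fun _ _ => Nat.zero_le _) hj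
  · rw [Finsupp.notMem_support_iff.1 hj]
    exact Nat.zero_le _

lemma apply_le_wtl (γ : MIdx) (k : ℕ) : k * γ (Sum.inl k) ≤ wtl γ := by
  by_cases hj : (Sum.inl k : Var) ∈ γ.support
  · exact Finset.single_le_sum
      (f := fun j => match j with | Sum.inl k' => k' * γ j | Sum.inr _ => 0)
      (fun j _ => by match j with | Sum.inl _ => exact Nat.zero_le _ | Sum.inr _ => exact le_rfl)
      hj
  · rw [Finsupp.notMem_support_iff.1 hj, Nat.mul_zero]
    exact Nat.zero_le _

lemma applyG_eq_Emap {Γ : MIdx → MIdx → ℝ} (hrow : RowFinite Γ)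
    (hmul : ∀ a b : FPS, applyG Γ (a * b) = applyG Γ a * applyG Γ b)
    (hone : applyG Γ 1 = 1) (hzk : ∀ k : ℕ, applyG Γ (zk k) = gammaZk q k)
    {c : FPS} (hc : OnlyZk c) : applyG Γ c = Emap q c := by
  classical
  set f : MIdx → FPS := fun γ => MvPowerSeries.monomial (R := ℝ) γ (c γ) with hf
  have hdec : c = PS f := (PS_single c).symm
  have hper : ∀ γ : MIdx, applyG Γ (f γ) = Emap q (f γ) := by
    intro γ
    by_cases h0 : c γ = 0
    · rw [hf]
      simp only [h0, map_zero]
      rw [applyG_zero, Emap_zero]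
    · have hγ : ∀ n : Pos2, γ (Sum.inr n) = 0 := by
        intro n
        by_contra hne
        exact h0 (hc γ ⟨n, hne⟩)
      have hm : f γ = c γ • MvPowerSeries.monomial (R := ℝ) γ 1 := by
        rw [hf, ← map_smul, smul_eq_mul, mul_one]
      rw [hm, applyG_smul hrow, Emap_smul, key_monomial q hmul hone hzk γ hγ]
  ext β
  rw [MvPowerSeries.coeff_apply, MvPowerSeries.coeff_apply]
  conv_lhs => rw [hdec]
  rw [applyG_PS hrow (Summ_single c), PS_apply,
    finsum_congr (fun γ => congrFun (hper γ) β)]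
  -- Now both sides are double finsums of `T`
  set T : MIdx → ℕ → ℝ := fun γ m =>
    (((m.factorial : ℝ))⁻¹ • (q ^ m * Dzero^[m] (f γ))) β with hT
  have hLHS : ∑ᶠ γ : MIdx, Emap q (f γ) β = ∑ᶠ γ : MIdx, ∑ᶠ m : ℕ, T γ m := rfl
  have hRHS : Emap q c β = ∑ᶠ m : ℕ, ∑ᶠ γ : MIdx, T γ m := by
    rw [show Emap q c β = ∑ᶠ m : ℕ, (((m.factorial : ℝ))⁻¹ • (q ^ m * Dzero^[m] c)) β from rfl]
    refine finsum_congr (fun m => ?_)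
    conv_lhs => rw [hdec, Dit_PS (Summ_single c) m,
      PS_mul_left (Summ_Dit (Summ_single c) m) (q ^ m)]
    rw [show (((m.factorial : ℝ))⁻¹ • PS fun γ => q ^ m * Dzero^[m] (f γ)) β
        = ((m.factorial : ℝ))⁻¹ * ∑ᶠ γ : MIdx, (q ^ m * Dzero^[m] (f γ)) β from rfl]
    rw [mul_finsum _ _]
    rfl
  rw [hLHS, hRHS]
  -- joint finiteness
  set B : MIdx := (∑ k ∈ Finset.range (wtl β + 1),
    Finsupp.single (Sum.inl k : Var) (degZ β)) + β with hB
  have hJoint : {p : MIdx × ℕ | T p.1 p.2 ≠ 0}.Finite := by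
    apply Set.Finite.subset (Set.Finite.prod (finite_le B) (Set.finite_Iic (wtl β)))
    rintro ⟨γ, m⟩ hp
    simp only [Set.mem_setOf_eq, hT, smul_app] at hp
    have h1 : (q ^ m * Dzero^[m] (f γ)) β ≠ 0 := right_ne_zero_of_mul hp
    rw [show (q ^ m * Dzero^[m] (f γ)) β
      = MvPowerSeries.coeff (R := ℝ) β (q ^ m * Dzero^[m] (f γ)) from rfl,
      MvPowerSeries.coeff_mul] at h1
    obtain ⟨p, hpmem, hne⟩ := Finset.exists_ne_zero_of_sum_ne_zero h1
    have h2 : (Dzero^[m] (f γ)) p.2 ≠ 0 := right_ne_zero_of_mul hne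
    obtain ⟨γ', hγ', hw, hd, hr⟩ := Dsupp m h2
    have hγγ : γ' = γ := by
      by_contra hne'
      apply hγ'
      rw [hf]
      show MvPowerSeries.coeff (R := ℝ) γ' (MvPowerSeries.monomial (R := ℝ) γ (c γ)) = 0
      rw [MvPowerSeries.coeff_monomial, if_neg hne']
    subst hγγ
    have hp2 : p.2 ≤ β := by
      refine le_iff_exists_add.2 ⟨p.1, ?_⟩
      rw [← Finset.HasAntidiagonal.mem_antidiagonal.1 hpmem, add_comm]
    have hwle : wtl p.2 ≤ wtl β := wtl_mono hp2
    have hdle : degZ p.2 ≤ degZ β := degZ_mono hp2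
    constructor
    · -- γ' ≤ B
      show γ' ≤ B
      rw [Finsupp.le_def]
      intro j
      have hBj : B j = (∑ k ∈ Finset.range (wtl β + 1),
          Finsupp.single (Sum.inl k : Var) (degZ β)) j + β j := by
        rw [hB, Finsupp.add_apply]
      obtain ⟨k⟩ | ⟨n⟩ := j
      · by_cases hk : k ≤ wtl β
        · have hsum : (∑ k' ∈ Finset.range (wtl β + 1),
              Finsupp.single (Sum.inl k' : Var) (degZ β)) (Sum.inl k) = degZ β := by
            rw [Finsupp.finset_sum_apply]
            rw [Finset.sum_eq_single k]
            · rw [Finsupp.single_apply, if_pos rfl]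
            · intro k' _ hk'
              rw [Finsupp.single_apply, if_neg (by simpa using hk')]
            · intro habs
              exact absurd (Finset.mem_range.2 (by omega)) habs
          have : γ' (Sum.inl k) ≤ degZ γ' := apply_le_degZ γ' _
          rw [hBj, hsum]
          omega
        · have h3 := apply_le_wtl γ' k
          have : γ' (Sum.inl k) = 0 := by
            by_contra h4
            have : k ≤ k * γ' (Sum.inl k) := Nat.le_mul_of_pos_right k (Nat.pos_of_ne_zero h4)
            omega
          rw [this]
          exact Nat.zero_le _
      · rw [hBj]
        have := hr n
        have : γ' (Sum.inr n) ≤ β (Sum.inr n) := by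
          rw [hr n]
          have : p.2 ≤ β := hp2
          exact Finsupp.le_def.1 this _
        omega
    · simp only [Set.mem_Iic]
      omega
  have hJoint' : {p : ℕ × MIdx | T p.2 p.1 ≠ 0}.Finite := by
    apply Set.Finite.subset (hJoint.image Prod.swap)
    rintro ⟨m, γ⟩ hp
    exact ⟨(γ, m), hp, rfl⟩
  rw [finsum_finsum_prod (fun γ m => T γ m) hJoint,
    finsum_finsum_prod (fun m γ => T γ m) hJoint']
  exact finsum_eq_of_bijective Prod.swap Prod.swap_bijective (fun p => rfl)

end Key
/-! ### Final assembly -/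

section Final

lemma mul_right_support {x y : FPS} {β : MIdx}
    (h : MvPowerSeries.coeff (R := ℝ) β (x * y) ≠ 0) :
    ∃ δ : MIdx, δ ≤ β ∧ MvPowerSeries.coeff (R := ℝ) δ y ≠ 0 := by
  classical
  rw [MvPowerSeries.coeff_mul] at h
  obtain ⟨p, hp, hne⟩ := Finset.exists_ne_zero_of_sum_ne_zero h
  refine ⟨p.2, ?_, right_ne_zero_of_mul hne⟩
  refine le_iff_exists_add.2 ⟨p.1, ?_⟩
  rw [← Finset.HasAntidiagonal.mem_antidiagonal.1 hp, add_comm]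

lemma zsupp_finite (β : MIdx) : {s : ℕ | β (Sum.inl s) ≠ 0}.Finite := by
  apply Set.Finite.subset (β.support.finite_toSet.preimage (Sum.inl_injective.injOn))
  intro s hs
  simp only [Set.mem_preimage, Finset.mem_coe, Finsupp.mem_support_iff]
  exact hs

lemma X_factor_ne {s : Var} {x : FPS} {β : MIdx}
    (h : MvPowerSeries.coeff (R := ℝ) β (MvPowerSeries.X s * x) ≠ 0) : β s ≠ 0 := by
  rw [MvPowerSeries.X_def, MvPowerSeries.coeff_monomial_mul] at h
  by_cases hle : Finsupp.single s 1 ≤ β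
  · have := Finsupp.single_le_iff.1 hle
    omega
  · rw [if_neg hle] at h
    exact absurd rfl h

lemma OnlyZk_Dit {c : FPS} (hc : OnlyZk c) (l : ℕ) : OnlyZk (Dzero^[l] c) := by
  intro β hβ
  by_contra h
  obtain ⟨γ, hγ, _, _, hr⟩ := Dsupp l h
  obtain ⟨n, hn⟩ := hβ
  refine hγ (hc γ ⟨n, ?_⟩)
  rw [hr n]
  exact hn

lemma PS_smul {ι : Type*} (r : ℝ) {g : ι → FPS} (hg : Summ g) :
    r • PS g = PS (fun i => r • g i) := by
  ext β
  rw [MvPowerSeries.coeff_apply, MvPowerSeries.coeff_apply, smul_app, PS_apply, PS_apply,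
    mul_finsum _ _]
  rfl

lemma PS_PS {ι κ : Type*} {F : ι → κ → FPS}
    (h : ∀ β : MIdx, {p : ι × κ | F p.1 p.2 β ≠ 0}.Finite) :
    PS (fun i => PS (fun j => F i j)) = PS (fun p : ι × κ => F p.1 p.2) := by
  ext β
  rw [MvPowerSeries.coeff_apply, MvPowerSeries.coeff_apply, PS_apply, PS_apply]
  exact finsum_finsum_prod (fun i j => F i j β) (h β)

lemma PS_nat_pairs {F : ℕ × ℕ → FPS} (h : Summ F) :
    PS F = PS (fun m : ℕ => ∑ i ∈ Finset.range (m + 1), F (i, m - i)) := by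
  ext β
  rw [MvPowerSeries.coeff_apply, MvPowerSeries.coeff_apply, PS_apply, PS_apply,
    finsum_nat_pairs _ (h β)]
  refine finsum_congr (fun m => ?_)
  rw [show (∑ i ∈ Finset.range (m + 1), F (i, m - i)) β
    = MvPowerSeries.coeff (R := ℝ) β (∑ i ∈ Finset.range (m + 1), F (i, m - i)) from rfl, map_sum]
  rfl

lemma piminus_eq (π π'' c : FPS) (ξ : ℝ) :
    piminus π π'' c ξ
      = PS (fun k : ℕ => zk k * π ^ k * π'')
        - PS (fun l : ℕ => ((l.factorial : ℝ))⁻¹ • (π ^ l * Dzero^[l] c)) + ξ • 1 := by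
  ext β
  rw [MvPowerSeries.coeff_apply]
  show piminus π π'' c ξ β = _
  rw [map_add, map_sub, map_smul, smul_eq_mul, PS_coeff, PS_coeff]
  rfl

end Final
section MainLemmas

variable (q : FPS)

lemma gammaZk_eq (k : ℕ) : gammaZk q k
    = PS (fun l : ℕ => (((k + l).choose k : ℕ) : ℝ) • (q ^ l * zk (k + l))) := rfl

lemma coeff_X_ne {δ : MIdx} {s : Var} (h : MvPowerSeries.coeff (R := ℝ) δ (MvPowerSeries.X s) ≠ 0) :
    δ = Finsupp.single s 1 := by
  classical
  rw [MvPowerSeries.coeff_X] at h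
  by_contra hne
  rw [if_neg hne] at h
  exact h rfl

lemma Summ_glk (k : ℕ) :
    Summ (fun l : ℕ => (((k + l).choose k : ℕ) : ℝ) • (q ^ l * zk (k + l))) := by
  intro β
  apply Set.Finite.subset ((zsupp_finite β).preimage (add_right_injective k).injOn)
  intro l hl
  simp only [Set.mem_setOf_eq, smul_app] at hl
  have h1 : (q ^ l * zk (k + l)) β ≠ 0 := right_ne_zero_of_mul hl
  obtain ⟨δ, hδle, hδ⟩ := mul_right_support h1
  rw [zk] at hδ
  have h2 := coeff_X_ne hδ
  subst h2
  have h3 := Finsupp.le_def.1 hδle (Sum.inl (k + l))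
  rw [Finsupp.single_apply, if_pos rfl] at h3
  simp only [Set.mem_preimage, Set.mem_setOf_eq]
  omega

lemma Summ_wD {g : ℕ → FPS} {r : ℕ → ℝ} (c : FPS) :
    Summ (fun m : ℕ => r m • (g m * Dzero^[m] c)) := by
  intro β
  apply Set.Finite.subset (Set.finite_Iic (wtl β))
  intro m hm
  simp only [Set.mem_setOf_eq, smul_app] at hm
  have h1 : MvPowerSeries.coeff (R := ℝ) β (g m * Dzero^[m] c) ≠ 0 := right_ne_zero_of_mul hm
  obtain ⟨δ, hδle, hδ⟩ := mul_right_support h1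
  obtain ⟨γ, _, hw, _, _⟩ := Dsupp m hδ
  have := wtl_mono hδle
  simp only [Set.mem_Iic]
  omega

end MainLemmas

/-- Intertwining of `π⁻` with the re-expansion map (identity (cw28)):
`Γ*(π⁻(π, π'', c, ξ)) = π⁻(Γ*π + q, Γ*π'', c, ξ)`. -/
theorem stmt_18 (q : FPS) (Γ : MIdx → MIdx → ℝ) (hrow : RowFinite Γ)
    (hmul : ∀ π π' : FPS, applyG Γ (π * π') = applyG Γ π * applyG Γ π')
    (hone : applyG Γ 1 = 1)
    (hzk : ∀ k : ℕ, applyG Γ (zk k) = gammaZk q k)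
    (π π'' c : FPS) (hc : OnlyZk c) (ξ : ℝ) :
    applyG Γ (piminus π π'' c ξ) = piminus (applyG Γ π + q) (applyG Γ π'') c ξ := by
  classical
  set Gπ : FPS := applyG Γ π with hGπ
  set Gπ'' : FPS := applyG Γ π'' with hGπ''
  have hSf1 : Summ (fun k : ℕ => zk k * π ^ k * π'') := by
    intro β
    apply (zsupp_finite β).subset
    intro k hk
    simp only [Set.mem_setOf_eq] at hk ⊢
    refine X_factor_ne (s := Sum.inl k) (x := π ^ k * π'') ?_
    rw [← mul_assoc]
    rw [show MvPowerSeries.X (Sum.inl k : Var) = zk k from rfl]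
    exact hk
  have hSf2 : Summ (fun l : ℕ => ((l.factorial : ℝ))⁻¹ • (π ^ l * Dzero^[l] c)) := Summ_wD c
  rw [piminus_eq π π'' c ξ, piminus_eq (Gπ + q) Gπ'' c ξ,
    applyG_add hrow, applyG_sub hrow, applyG_smul hrow, hone]
  -- first sum
  have hA : applyG Γ (PS (fun k : ℕ => zk k * π ^ k * π''))
      = PS (fun m : ℕ => zk m * (Gπ + q) ^ m * Gπ'') := by
    rw [applyG_PS hrow hSf1]
    have step1 : ∀ k : ℕ, applyG Γ (zk k * π ^ k * π'')
        = PS (fun l : ℕ => (((k + l).choose k : ℕ) : ℝ)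
            • (zk (k + l) * (q ^ l * (Gπ ^ k * Gπ'')))) := by
      intro k
      rw [hmul, hmul, applyG_pow hmul hone, hzk, gammaZk_eq,
        PS_mul_right (Summ_glk q k) (Gπ ^ k),
        PS_mul_right (Summ_mul_right (Summ_glk q k) (Gπ ^ k)) Gπ'']
      refine PS_congr (fun l => ?_)
      rw [smul_mul_assoc, smul_mul_assoc]
      congr 1
      ring
    rw [PS_congr step1]
    have hJ1 : ∀ β : MIdx, {p : ℕ × ℕ | ((((p.1 + p.2).choose p.1 : ℕ) : ℝ)
        • (zk (p.1 + p.2) * (q ^ p.2 * (Gπ ^ p.1 * Gπ'')))) β ≠ 0}.Finite := by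
      intro β
      set M : ℕ := ((zsupp_finite β).toFinset).sup id with hM
      apply Set.Finite.subset ((Set.finite_Iic M).prod (Set.finite_Iic M))
      rintro ⟨k, l⟩ hp
      simp only [Set.mem_setOf_eq, smul_app] at hp
      have h1 : (zk (k + l) * (q ^ l * (Gπ ^ k * Gπ''))) β ≠ 0 := right_ne_zero_of_mul hp
      rw [show zk (k + l) = MvPowerSeries.X (Sum.inl (k + l) : Var) from rfl] at h1
      have h2 : β (Sum.inl (k + l)) ≠ 0 := X_factor_ne h1
      have h3 : k + l ≤ M := by
        refine Finset.le_sup (f := id) ?_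
        rw [Set.Finite.mem_toFinset]
        exact h2
      exact ⟨by simp only [Set.mem_Iic]; omega, by simp only [Set.mem_Iic]; omega⟩
    rw [PS_PS hJ1, PS_nat_pairs (fun β => (hJ1 β).subset (fun p hp => hp))]
    refine PS_congr (fun m => ?_)
    rw [add_pow, Finset.mul_sum, Finset.sum_mul]
    refine Finset.sum_congr rfl (fun i hi => ?_)
    rw [Finset.mem_range] at hi
    dsimp only
    rw [show i + (m - i) = m from by omega]
    rw [Nat.cast_smul_eq_nsmul, nsmul_eq_mul]
    ring
  -- second sum
  have hB : applyG Γ (PS (fun l : ℕ => ((l.factorial : ℝ))⁻¹ • (π ^ l * Dzero^[l] c)))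
      = PS (fun n : ℕ => ((n.factorial : ℝ))⁻¹ • ((Gπ + q) ^ n * Dzero^[n] c)) := by
    rw [applyG_PS hrow hSf2]
    have hSE : ∀ l : ℕ, Summ (fun m : ℕ => ((m.factorial : ℝ))⁻¹
        • (q ^ m * Dzero^[m + l] c)) := by
      intro l
      have heq : (fun m : ℕ => ((m.factorial : ℝ))⁻¹ • (q ^ m * Dzero^[m + l] c))
          = (fun m : ℕ => ((m.factorial : ℝ))⁻¹ • (q ^ m * Dzero^[m] (Dzero^[l] c))) := by
        funext m
        rw [Function.iterate_add_apply]
      rw [heq]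
      exact Summ_Efam q _
    have step1 : ∀ l : ℕ, applyG Γ (((l.factorial : ℝ))⁻¹ • (π ^ l * Dzero^[l] c))
        = PS (fun m : ℕ => (((l.factorial : ℝ))⁻¹ * ((m.factorial : ℝ))⁻¹)
            • ((Gπ ^ l * q ^ m) * Dzero^[l + m] c)) := by
      intro l
      rw [applyG_smul hrow, hmul, applyG_pow hmul hone,
        applyG_eq_Emap q hrow hmul hone hzk (OnlyZk_Dit hc l)]
      rw [show Emap q (Dzero^[l] c) = PS (fun m : ℕ =>
          ((m.factorial : ℝ))⁻¹ • (q ^ m * Dzero^[m + l] c)) from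
        PS_congr (fun m => by rw [Function.iterate_add_apply])]
      rw [PS_mul_left (hSE l) (Gπ ^ l), PS_smul _ (Summ_mul_left (hSE l) (Gπ ^ l))]
      refine PS_congr (fun m => ?_)
      rw [mul_smul_comm, smul_smul]
      congr 1
      rw [show m + l = l + m from by omega, ← mul_assoc]
    rw [PS_congr step1]
    have hJ2 : ∀ β : MIdx, {p : ℕ × ℕ | ((((p.1.factorial : ℝ))⁻¹ * ((p.2.factorial : ℝ))⁻¹)
        • ((Gπ ^ p.1 * q ^ p.2) * Dzero^[p.1 + p.2] c)) β ≠ 0}.Finite := by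
      intro β
      apply Set.Finite.subset ((Set.finite_Iic (wtl β)).prod (Set.finite_Iic (wtl β)))
      rintro ⟨l, m⟩ hp
      simp only [Set.mem_setOf_eq, smul_app] at hp
      have h1 : MvPowerSeries.coeff (R := ℝ) β ((Gπ ^ l * q ^ m) * Dzero^[l + m] c) ≠ 0 :=
        right_ne_zero_of_mul hp
      obtain ⟨δ, hδle, hδ⟩ := mul_right_support h1
      obtain ⟨γ, _, hw, _, _⟩ := Dsupp (l + m) hδ
      have := wtl_mono hδle
      exact ⟨by simp only [Set.mem_Iic]; omega, by simp only [Set.mem_Iic]; omega⟩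
    rw [PS_PS hJ2, PS_nat_pairs (fun β => (hJ2 β).subset (fun p hp => hp))]
    refine PS_congr (fun n => ?_)
    rw [add_pow, Finset.sum_mul, Finset.smul_sum]
    refine Finset.sum_congr rfl (fun i hi => ?_)
    rw [Finset.mem_range] at hi
    have hi' : i ≤ n := by omega
    dsimp only
    rw [show i + (n - i) = n from by omega]
    have hsc : ((i.factorial : ℝ))⁻¹ * (((n - i).factorial : ℝ))⁻¹
        = ((n.factorial : ℝ))⁻¹ * ((n.choose i : ℕ) : ℝ) := by
      rw [← Nat.choose_symm hi']
      exact (choose_inv_fact hi').symm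
    rw [hsc, ← smul_smul]
    congr 1
    rw [Nat.cast_smul_eq_nsmul, nsmul_eq_mul]
    ring
  rw [hA, hB]
end
end

section
/- Annealed equivalence of norms for random anisotropic polynomials (the 'three-point argument' ingredient in the proof of Lemma 7.3): Let η > 0, 1 ≤ p < ∞, r > 0 and x ∈ ℝ². For each n = (n₁,n₂) ∈ ℕ² with |n| := n₁ + 2n₂ < η, let c_n : Ω → ℝ be p-integrable. Then max over n with |n| < η of r^{|n|} E^{1/p}|c_n|^p ≤ C · (1/|B_r(x)|) ∫_{B_r(x)} E^{1/p}| Σ_{n: |n|<η} c_n (z₁−x₁)^{n₁}(z₂−x₂)^{n₂} |^p dz, where B_r(x) := {z ∈ ℝ² : ((z₁−x₁)⁴ + (z₂−x₂)²)^{1/4} ≤ r} is the parabolic ball, |B_r(x)| its Lebesgue measure, and the constant C depends only on η and p (in particular not on r, x, or the c_n). -/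
open MeasureTheory
open scoped ENNReal

noncomputable section

/-- Space-time ℝ², with the Euclidean (inner product) structure needed for the
Fourier transform. -/
abbrev E2 : Type := EuclideanSpace ℝ (Fin 2)

/-- The parabolic (Carnot–Carathéodory) quasi-norm `|z| = (z₁⁴ + z₂²)^{1/4}`. -/
def pnorm (z : E2) : ℝ := ((z 0) ^ 4 + (z 1) ^ 2) ^ ((1 : ℝ) / 4)

/-- Partial derivative in the `i`-th coordinate direction. -/
def pd (i : Fin 2) (g : E2 → ℝ) : E2 → ℝ := fun z => fderiv ℝ g z (EuclideanSpace.single i 1)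

/-- Iterated partial derivatives `∂^n = ∂₁^{n₁} ∂₂^{n₂}`. -/
def pdN (n : ℕ × ℕ) (g : E2 → ℝ) : E2 → ℝ := (pd 0)^[n.1] ((pd 1)^[n.2] g)

/-- `ψ` has, at each time `t > 0`, the Fourier transform `q ↦ exp(−t(q₁⁴ + q₂²))`. -/
def HasKernelFT (ψ : ℝ → SchwartzMap E2 ℝ) : Prop :=
  ∀ t : ℝ, 0 < t → ∀ q : E2,
    VectorFourier.fourierIntegral Real.fourierChar volume (innerₗ E2) (fun z => ((ψ t z : ℝ) : ℂ)) q
      = ((Real.exp (-t * ((q 0) ^ 4 + (q 1) ^ 2)) : ℝ) : ℂ)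

namespace Stmt19

def I01 : Set ℝ := Set.Icc 0 (1/2)

lemma cont_integrableOn_I01 {f : ℝ → ℝ} (hf : Continuous f) : IntegrableOn f I01 volume :=
  hf.continuousOn.integrableOn_compact isCompact_Icc

lemma onedim (N : ℕ) : ∃ U : Fin N → Fin N → ℝ,
    ∀ i j : Fin N, (∫ s in I01, (∑ k : Fin N, U i k * s ^ (k : ℕ)) * s ^ (j : ℕ))
      = if i = j then 1 else 0 := by
  classical
  set g : ℕ → ℝ := fun m => ∫ s in I01, s ^ m with hg
  set G : Matrix (Fin N) (Fin N) ℝ := fun j k => g ((j : ℕ) + (k : ℕ)) with hG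
  have key : ∀ (u : Fin N → ℝ) (j : Fin N),
      (∫ s in I01, (∑ k : Fin N, u k * s ^ (k : ℕ)) * s ^ (j : ℕ)) = G.mulVec u j := by
    intro u j
    have hexp : ∀ s : ℝ, (∑ k : Fin N, u k * s ^ (k : ℕ)) * s ^ (j : ℕ)
        = ∑ k : Fin N, u k * s ^ ((j : ℕ) + (k : ℕ)) := by
      intro s; rw [Finset.sum_mul]
      exact Finset.sum_congr rfl fun k _ => by rw [pow_add]; ring
    simp_rw [hexp]
    rw [integral_finset_sum]
    · simp_rw [integral_const_mul]
      simp [hG, Matrix.mulVec, dotProduct, mul_comm, hg]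
    · intro k _
      exact cont_integrableOn_I01 (continuous_const.mul (continuous_pow _))
  have hker : ∀ u : Fin N → ℝ, G.mulVec u = 0 → u = 0 := by
    intro u hu
    by_contra hne
    obtain ⟨k0, hk0⟩ : ∃ k, u k ≠ 0 := by
      by_contra h; push_neg at h; exact hne (funext h)
    set pfun : ℝ → ℝ := fun s => ∑ k : Fin N, u k * s ^ (k : ℕ) with hpfun
    have hcont : Continuous pfun :=
      continuous_finset_sum _ fun k _ => continuous_const.mul (continuous_pow _)
    have hzero : (∫ s in I01, pfun s * pfun s) = 0 := by
      have hexp : ∀ s, pfun s * pfun s = ∑ j : Fin N, u j * (pfun s * s ^ (j : ℕ)) := by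
        intro s
        calc pfun s * pfun s = (∑ j : Fin N, u j * s ^ (j : ℕ)) * pfun s := by rw [hpfun]
        _ = ∑ j : Fin N, u j * (pfun s * s ^ (j : ℕ)) := by
            rw [Finset.sum_mul]; exact Finset.sum_congr rfl fun j _ => by ring
      simp_rw [hexp]
      rw [integral_finset_sum]
      · simp_rw [integral_const_mul]
        have hj : ∀ j : Fin N, (∫ s in I01, pfun s * s ^ (j : ℕ)) = 0 := by
          intro j; rw [key u j]
          have := congrFun hu j; simpa using this
        simp [hj]
      · intro j _
        exact cont_integrableOn_I01 (continuous_const.mul (hcont.mul (continuous_pow _)))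
    have hpos : 0 < ∫ s in I01, pfun s * pfun s := by
      set q : Polynomial ℝ := ∑ k : Fin N, Polynomial.C (u k) * Polynomial.X ^ (k : ℕ) with hq
      have hqeval : ∀ s, q.eval s = pfun s := by
        intro s; rw [hq, hpfun]; simp [Polynomial.eval_finset_sum]
      have hqne : q ≠ 0 := by
        intro h
        have hcoeff : q.coeff (k0 : ℕ) = u k0 := by
          rw [hq, Polynomial.finset_sum_coeff]
          rw [Finset.sum_eq_single k0]
          · simp
          · intro k _ hk
            simp only [Polynomial.coeff_C_mul, Polynomial.coeff_X_pow, Fin.val_eq_val]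
            rw [if_neg (fun h => hk h.symm), mul_zero]
          · simp
        rw [h] at hcoeff; simp at hcoeff; exact hk0 hcoeff.symm
      obtain ⟨s0, hs0mem, hs0⟩ : ∃ s0 ∈ Set.Ioo (0:ℝ) (1/2), pfun s0 ≠ 0 := by
        by_contra h
        push_neg at h
        have hsub : Set.Ioo (0:ℝ) (1/2) ⊆ {s | q.IsRoot s} := by
          intro s hs
          simp only [Set.mem_setOf_eq, Polynomial.IsRoot, hqeval]
          exact h s hs
        exact (Set.Ioo_infinite (by norm_num))
          ((Polynomial.finite_setOf_isRoot hqne).subset hsub)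
      have hnn : 0 ≤ᵐ[volume.restrict I01] fun s => pfun s * pfun s :=
        Filter.Eventually.of_forall fun s => mul_self_nonneg _
      have hint : IntegrableOn (fun s => pfun s * pfun s) I01 volume :=
        cont_integrableOn_I01 (hcont.mul hcont)
      rw [setIntegral_pos_iff_support_of_nonneg_ae hnn hint]
      have hopen : IsOpen ({s | pfun s ≠ 0} ∩ Set.Ioo 0 (1/2)) :=
        ((isOpen_compl_singleton.preimage hcont)).inter isOpen_Ioo
      have hsub : ({s | pfun s ≠ 0} ∩ Set.Ioo 0 (1/2))
          ⊆ Function.support (fun s => pfun s * pfun s) ∩ I01 := by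
        rintro s ⟨h1, h2⟩
        exact ⟨mul_ne_zero h1 h1, Set.Ioo_subset_Icc_self h2⟩
      calc (0:ℝ≥0∞) < volume ({s | pfun s ≠ 0} ∩ Set.Ioo 0 (1/2)) :=
            hopen.measure_pos volume ⟨s0, hs0, hs0mem⟩
        _ ≤ _ := measure_mono hsub
    exact absurd hzero (ne_of_gt hpos)
  have hinj : Function.Injective G.mulVecLin := by
    rw [injective_iff_map_eq_zero]
    intro u hu
    exact hker u (by simpa using hu)
  have hsurj : Function.Surjective G.mulVecLin := LinearMap.surjective_of_injective hinj
  choose U hU using fun i => hsurj (Pi.single i 1)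
  refine ⟨U, fun i j => ?_⟩
  rw [key (U i) j]
  have h2 : G.mulVec (U i) j = Pi.single (M := fun _ => ℝ) i 1 j := by
    have := congrFun (hU i) j; simpa using this
  rw [h2, Pi.single_apply]
  simp [eq_comm]

end Stmt19

namespace Stmt19

def TN (N : ℕ) : Finset (ℕ × ℕ) := Finset.range N ×ˢ Finset.range N

def Bset : Set E2 := {y : E2 | pnorm y ≤ 1}

lemma contCoord (i : Fin 2) : Continuous fun y : E2 => y i :=
  (EuclideanSpace.proj i (𝕜 := ℝ)).continuous

lemma Bset_eq : Bset = {y : E2 | (y 0)^4 + (y 1)^2 ≤ 1} := by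
  ext y
  simp only [Bset, Set.mem_setOf_eq, pnorm]
  have h := Real.rpow_le_rpow_iff (x := (y 0)^4 + (y 1)^2) (y := 1)
    (by positivity) zero_le_one (by norm_num : (0:ℝ) < 1/4)
  rw [Real.one_rpow] at h
  exact h

lemma isCompact_Bset : IsCompact Bset := by
  rw [Bset_eq]
  have hcl : IsClosed {y : E2 | (y 0)^4 + (y 1)^2 ≤ 1} :=
    isClosed_le (((contCoord 0).pow 4).add ((contCoord 1).pow 2)) continuous_const
  have hsub : {y : E2 | (y 0)^4 + (y 1)^2 ≤ 1} ⊆ Metric.closedBall 0 2 := by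
    intro y hy
    simp only [Set.mem_setOf_eq] at hy
    rw [Metric.mem_closedBall, dist_zero_right, EuclideanSpace.norm_eq, Fin.sum_univ_two]
    have h0 : (y 0)^2 ≤ 1 := by nlinarith [sq_nonneg ((y 0)^2 - 1), sq_nonneg (y 1)]
    have h1 : (y 1)^2 ≤ 1 := by
      have h4 : (0:ℝ) ≤ (y 0)^4 := by positivity
      linarith
    rw [Real.norm_eq_abs, Real.norm_eq_abs, sq_abs, sq_abs]
    calc Real.sqrt ((y 0)^2 + (y 1)^2) ≤ Real.sqrt 4 := Real.sqrt_le_sqrt (by linarith)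
    _ = 2 := by rw [show (4:ℝ) = 2^2 by norm_num, Real.sqrt_sq (by norm_num : (0:ℝ) ≤ 2)]
  exact (isCompact_closedBall (0:E2) 2).of_isClosed_subset hcl hsub

lemma measurableSet_Bset : MeasurableSet Bset :=
  isCompact_Bset.isClosed.measurableSet

lemma volume_Bset_pos : 0 < volume Bset := by
  have hO : IsOpen {y : E2 | (y 0)^4 + (y 1)^2 < 1} :=
    isOpen_lt (((contCoord 0).pow 4).add ((contCoord 1).pow 2)) continuous_const
  have h0 : (0:E2) ∈ {y : E2 | (y 0)^4 + (y 1)^2 < 1} := by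
    simp only [Set.mem_setOf_eq]
    norm_num
  calc (0:ℝ≥0∞) < volume {y : E2 | (y 0)^4 + (y 1)^2 < 1} :=
      hO.measure_pos volume ⟨0, h0⟩
  _ ≤ volume Bset := measure_mono (by
      rw [Bset_eq]; exact Set.setOf_subset_setOf.mpr fun y hy => le_of_lt hy)

lemma volume_Bset_lt_top : volume Bset < ⊤ := isCompact_Bset.measure_lt_top

def Rset : Set E2 := {y : E2 | y 0 ∈ I01 ∧ y 1 ∈ I01}

lemma Rset_subset_Bset : Rset ⊆ Bset := by
  intro y hy
  rw [Bset_eq]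
  obtain ⟨⟨h1, h2⟩, h3, h4⟩ := hy
  simp only [Bset_eq, Set.mem_setOf_eq]
  have ha : (y 0)^4 ≤ (1/2:ℝ)^4 := pow_le_pow_left₀ h1 h2 4
  have hb : (y 1)^2 ≤ (1/2:ℝ)^2 := pow_le_pow_left₀ h3 h4 2
  norm_num at ha hb ⊢
  linarith

lemma isClosed_Rset : IsClosed Rset :=
  ((isClosed_Icc.preimage (contCoord 0)).inter (isClosed_Icc.preimage (contCoord 1)))

lemma isCompact_Rset : IsCompact Rset :=
  isCompact_Bset.of_isClosed_subset isClosed_Rset Rset_subset_Bset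

lemma measurableSet_Rset : MeasurableSet Rset := isClosed_Rset.measurableSet

lemma fubiniR (f g : ℝ → ℝ) :
    (∫ y in Rset, f (y 0) * g (y 1)) = (∫ s in I01, f s) * (∫ s in I01, g s) := by
  set emb := (MeasurableEquiv.toLp 2 (Fin 2 → ℝ)).symm.trans
    (MeasurableEquiv.finTwoArrow (α := ℝ)) with hemb
  have mp : MeasurePreserving (⇑emb) volume volume :=
    (volume_preserving_finTwoArrow ℝ).comp
      (EuclideanSpace.volume_preserving_symm_measurableEquiv_toLp (Fin 2))
  have happ : ∀ y : E2, emb y = (y 0, y 1) := fun y => rfl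
  have hpre : Rset = emb ⁻¹' (I01 ×ˢ I01) := by
    ext y
    simp [happ, Rset, Set.mem_prod]
  rw [hpre]
  have h2 := mp.setIntegral_preimage_emb emb.measurableEmbedding
    (fun pq : ℝ × ℝ => f pq.1 * g pq.2) (I01 ×ˢ I01)
  rw [show (fun y : E2 => f (y 0) * g (y 1)) = fun y : E2 => f (emb y).1 * g (emb y).2
    from funext fun y => by rw [happ]] at *
  rw [h2, Measure.volume_eq_prod]
  exact setIntegral_prod_mul f g I01 I01

end Stmt19

namespace Stmt19

def dvec (r : ℝ) : Fin 2 → ℝ := fun i => if i = 0 then r else r ^ 2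

def Ldiag (r : ℝ) : E2 →ₗ[ℝ] E2 where
  toFun y := WithLp.toLp 2 (fun i => dvec r i * y i)
  map_add' y z := by
    ext i
    simp [PiLp.add_apply, mul_add]
  map_smul' t y := by
    ext i
    simp [PiLp.smul_apply, smul_eq_mul]
    ring

lemma Ldiag_apply (r : ℝ) (y : E2) (i : Fin 2) : Ldiag r y i = dvec r i * y i := rfl

lemma Ldiag_apply0 (r : ℝ) (y : E2) : Ldiag r y 0 = r * y 0 := rfl

lemma Ldiag_apply1 (r : ℝ) (y : E2) : Ldiag r y 1 = r ^ 2 * y 1 := rfl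

lemma det_Ldiag (r : ℝ) : LinearMap.det (Ldiag r) = r ^ 3 := by
  classical
  set b := (EuclideanSpace.basisFun (Fin 2) ℝ).toBasis with hb
  rw [← LinearMap.det_toMatrix b, Matrix.det_fin_two]
  have hentry : ∀ i j : Fin 2, LinearMap.toMatrix b b (Ldiag r) i j
      = if i = j then dvec r i else 0 := by
    intro i j
    rw [LinearMap.toMatrix_apply, hb]
    simp only [OrthonormalBasis.coe_toBasis, OrthonormalBasis.coe_toBasis_repr_apply,
      EuclideanSpace.basisFun_repr, EuclideanSpace.basisFun_apply]
    rw [Ldiag_apply, EuclideanSpace.single_apply]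
    by_cases h : i = j <;> simp [h, eq_comm]
  rw [hentry 0 0, hentry 0 1, hentry 1 0, hentry 1 1]
  norm_num [dvec]
  ring

lemma pnorm_nonneg (y : E2) : 0 ≤ pnorm y := by
  unfold pnorm; positivity

lemma pnorm_scale (r : ℝ) (hr : 0 ≤ r) (y : E2) : pnorm (Ldiag r y) = r * pnorm y := by
  unfold pnorm
  rw [Ldiag_apply0, Ldiag_apply1]
  have h : (r * y 0)^4 + (r^2 * y 1)^2 = r^4 * ((y 0)^4 + (y 1)^2) := by ring
  rw [h, Real.mul_rpow (by positivity) (by positivity)]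
  congr 1
  rw [show (r:ℝ)^4 = r ^ ((4:ℕ):ℝ) from (Real.rpow_natCast r 4).symm,
    ← Real.rpow_mul hr]
  norm_num

lemma Ldiag_inv (r : ℝ) (hr : r ≠ 0) (v : E2) : Ldiag r (Ldiag r⁻¹ v) = v := by
  ext i
  rw [Ldiag_apply, Ldiag_apply]
  fin_cases i <;> simp [dvec] <;> field_simp

def Tmap (r : ℝ) (x : E2) : E2 → E2 := fun y => x + Ldiag r y

lemma Tmap_image (r : ℝ) (hr : 0 < r) (x : E2) :
    Tmap r x '' Bset = {z : E2 | pnorm (z - x) ≤ r} := by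
  ext z
  constructor
  · rintro ⟨y, hy, rfl⟩
    simp only [Set.mem_setOf_eq, Tmap, add_sub_cancel_left]
    rw [pnorm_scale r hr.le]
    calc r * pnorm y ≤ r * 1 := by
          exact mul_le_mul_of_nonneg_left hy hr.le
    _ = r := mul_one r
  · intro hz
    refine ⟨Ldiag r⁻¹ (z - x), ?_, ?_⟩
    · simp only [Bset, Set.mem_setOf_eq]
      rw [pnorm_scale r⁻¹ (by positivity)]
      rw [inv_mul_le_iff₀ hr, mul_one]
      exact hz
    · simp only [Tmap]
      rw [Ldiag_inv r hr.ne']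
      abel

lemma Tmap_injOn (r : ℝ) (hr : 0 < r) (x : E2) : Set.InjOn (Tmap r x) Bset := by
  intro y _ y' _ h
  have h2 : Ldiag r y = Ldiag r y' := add_left_cancel h
  ext i
  have h3 : Ldiag r y i = Ldiag r y' i := by rw [h2]
  rw [Ldiag_apply, Ldiag_apply] at h3
  have hd : dvec r i ≠ 0 := by
    fin_cases i <;> simp [dvec] <;> positivity
  exact mul_left_cancel₀ hd h3

lemma cov (r : ℝ) (hr : 0 < r) (x : E2) (g : E2 → ℝ) :
    (∫ z in {z : E2 | pnorm (z - x) ≤ r}, g z) = r ^ 3 * ∫ y in Bset, g (Tmap r x y) := by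
  rw [← Tmap_image r hr x]
  have hderiv : ∀ y ∈ Bset, HasFDerivWithinAt (Tmap r x)
      ((Ldiag r).toContinuousLinearMap) Bset y := by
    intro y _
    exact (((Ldiag r).toContinuousLinearMap.hasFDerivAt).const_add x).hasFDerivWithinAt
  rw [integral_image_eq_integral_abs_det_fderiv_smul volume measurableSet_Bset hderiv
    (Tmap_injOn r hr x) g]
  have hdet : ((Ldiag r).toContinuousLinearMap : E2 →L[ℝ] E2).det = r ^ 3 := by
    rw [ContinuousLinearMap.det]
    rw [LinearMap.coe_toContinuousLinearMap]
    exact det_Ldiag r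
  simp_rw [hdet, abs_of_pos (pow_pos hr 3), smul_eq_mul]
  rw [integral_const_mul]

open Pointwise in
lemma vol_ball (r : ℝ) (hr : 0 < r) (x : E2) :
    volume {z : E2 | pnorm (z - x) ≤ r} = ENNReal.ofReal (r ^ 3) * volume Bset := by
  rw [← Tmap_image r hr x]
  have himg : Tmap r x '' Bset = x +ᵥ (⇑(Ldiag r) '' Bset) := by
    rw [← Set.image_vadd, Set.image_image]
    rfl
  rw [himg, measure_vadd, Measure.addHaar_image_linearMap, det_Ldiag,
    abs_of_pos (pow_pos hr 3)]

end Stmt19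

namespace Stmt19

lemma core {X : Type} [NormedAddCommGroup X] [NormedSpace ℝ X] [CompleteSpace X] (N : ℕ) :
    ∃ C : ℝ, 0 < C ∧ ∀ (F : ℕ × ℕ → X) (n : ℕ × ℕ), n ∈ TN N →
      ‖F n‖ ≤ C * ∫ y in Bset, ‖∑ m ∈ TN N, ((y 0) ^ m.1 * (y 1) ^ m.2) • F m‖ := by
  classical
  obtain ⟨U, hU⟩ := onedim N
  set A : Fin N → ℝ := fun i => ∑ k, |U i k| with hA
  have hAnn : ∀ i, 0 ≤ A i := fun i => Finset.sum_nonneg fun k _ => abs_nonneg _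
  have hsumA : 0 ≤ ∑ i, A i := Finset.sum_nonneg fun i _ => hAnn i
  set M : ℝ := (∑ i, A i + 1) ^ 2 with hM
  have hM1 : 1 ≤ M := by nlinarith
  refine ⟨M, by linarith, ?_⟩
  intro F n hnTN
  have hn := hnTN
  rw [TN, Finset.mem_product, Finset.mem_range, Finset.mem_range] at hn
  set i1 : Fin N := ⟨n.1, hn.1⟩ with hi1
  set i2 : Fin N := ⟨n.2, hn.2⟩ with hi2
  set u1 : ℝ → ℝ := fun s => ∑ k, U i1 k * s ^ (k : ℕ) with hu1
  set u2 : ℝ → ℝ := fun s => ∑ k, U i2 k * s ^ (k : ℕ) with hu2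
  have hu1cont : Continuous u1 :=
    continuous_finset_sum _ fun k _ => continuous_const.mul (continuous_pow _)
  have hu2cont : Continuous u2 :=
    continuous_finset_sum _ fun k _ => continuous_const.mul (continuous_pow _)
  set w : E2 → ℝ := fun y => u1 (y 0) * u2 (y 1) with hw
  have hwcont : Continuous w :=
    (hu1cont.comp (contCoord 0)).mul (hu2cont.comp (contCoord 1))
  set Q : E2 → X := fun y => ∑ m ∈ TN N, ((y 0) ^ m.1 * (y 1) ^ m.2) • F m with hQ
  have hmoncont : ∀ m : ℕ × ℕ, Continuous fun y : E2 => (y 0) ^ m.1 * (y 1) ^ m.2 :=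
    fun m => ((contCoord 0).pow m.1).mul ((contCoord 1).pow m.2)
  have hQcont : Continuous Q :=
    continuous_finset_sum _ fun m _ => (hmoncont m).smul continuous_const
  -- representation
  have hbound : ∀ (i : Fin N) (s : ℝ), s ∈ I01 → |∑ k, U i k * s ^ (k : ℕ)| ≤ A i := by
    intro i s hs
    refine (Finset.abs_sum_le_sum_abs _ _).trans ?_
    apply Finset.sum_le_sum
    intro k _
    rw [abs_mul]
    have hs1 : |s ^ (k : ℕ)| ≤ 1 := by
      rw [abs_pow]
      apply pow_le_one₀ (abs_nonneg _)
      rw [abs_of_nonneg hs.1]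
      have := hs.2
      norm_num at this ⊢
      linarith
    nlinarith [abs_nonneg (U i k)]
  have hrepr : (∫ y in Rset, w y • Q y) = F n := by
    have hexp : ∀ y : E2, w y • Q y
        = ∑ m ∈ TN N, (w y * ((y 0) ^ m.1 * (y 1) ^ m.2)) • F m := by
      intro y
      rw [hQ, Finset.smul_sum]
      exact Finset.sum_congr rfl fun m _ => by rw [smul_smul]
    simp_rw [hexp]
    rw [integral_finset_sum]
    swap
    · intro m _
      exact (((hwcont.mul (hmoncont m)).smul (continuous_const : Continuous fun _ : E2 => F m)).continuousOn.integrableOn_compact isCompact_Rset)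
    have hterm : ∀ m ∈ TN N, (∫ y in Rset, (w y * ((y 0) ^ m.1 * (y 1) ^ m.2)) • F m)
        = (if n = m then (1:ℝ) else 0) • F m := by
      intro m hm
      rw [TN, Finset.mem_product, Finset.mem_range, Finset.mem_range] at hm
      rw [integral_smul_const]
      congr 1
      have hfactor : (fun y : E2 => w y * ((y 0) ^ m.1 * (y 1) ^ m.2))
          = fun y : E2 => (u1 (y 0) * (y 0) ^ m.1) * (u2 (y 1) * (y 1) ^ m.2) := by
        funext y; rw [hw]; ring
      have hff := fubiniR (fun s => u1 s * s ^ m.1) (fun s => u2 s * s ^ m.2)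
      simp only at hff
      rw [hfactor, hff]
      simp only [hu1, hu2]
      rw [hU i1 ⟨m.1, hm.1⟩, hU i2 ⟨m.2, hm.2⟩]
      by_cases h1 : n.1 = m.1 <;> by_cases h2 : n.2 = m.2
      · have : n = m := Prod.ext h1 h2
        simp [this, hi1, hi2, Fin.mk.injEq, h1, h2]
      · have : n ≠ m := fun h => h2 (by rw [h])
        simp [this, hi1, hi2, Fin.mk.injEq, h1, h2]
      · have : n ≠ m := fun h => h1 (by rw [h])
        simp [this, hi1, hi2, Fin.mk.injEq, h1, h2]
      · have : n ≠ m := fun h => h1 (by rw [h])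
        simp [this, hi1, hi2, Fin.mk.injEq, h1, h2]
    rw [Finset.sum_congr rfl hterm]
    have : ∀ m ∈ TN N, (if n = m then (1:ℝ) else 0) • F m
        = if n = m then F m else 0 := by
      intro m _; by_cases h : n = m <;> simp [h]
    rw [Finset.sum_congr rfl this, Finset.sum_ite_eq (TN N) n F, if_pos hnTN]
  -- norm estimate
  have hQint : IntegrableOn (fun y => ‖Q y‖) Bset volume :=
    (hQcont.norm.continuousOn.integrableOn_compact isCompact_Bset)
  have h1 : ‖F n‖ ≤ ∫ y in Rset, ‖w y • Q y‖ := by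
    rw [← hrepr]
    exact norm_integral_le_integral_norm _
  have h2 : (∫ y in Rset, ‖w y • Q y‖) ≤ ∫ y in Rset, M * ‖Q y‖ := by
    apply setIntegral_mono_on
    · exact ((hwcont.smul hQcont).norm.continuousOn.integrableOn_compact isCompact_Rset)
    · exact (continuous_const.mul hQcont.norm).continuousOn.integrableOn_compact isCompact_Rset
    · exact measurableSet_Rset
    · intro y hy
      rw [norm_smul]
      apply mul_le_mul_of_nonneg_right _ (norm_nonneg _)
      have hb1 := hbound i1 (y 0) hy.1
      have hb2 := hbound i2 (y 1) hy.2
      calc ‖w y‖ = |u1 (y 0)| * |u2 (y 1)| := by rw [hw]; exact abs_mul _ _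
      _ ≤ A i1 * A i2 := mul_le_mul hb1 hb2 (abs_nonneg _) (hAnn _)
      _ ≤ M := by
          have ha1 : A i1 ≤ ∑ i, A i :=
            Finset.single_le_sum (fun i _ => hAnn i) (Finset.mem_univ i1)
          have ha2 : A i2 ≤ ∑ i, A i :=
            Finset.single_le_sum (fun i _ => hAnn i) (Finset.mem_univ i2)
          rw [hM]
          nlinarith [hAnn i1, hAnn i2]
  have h3 : (∫ y in Rset, M * ‖Q y‖) = M * ∫ y in Rset, ‖Q y‖ := integral_const_mul _ _
  have h4 : (∫ y in Rset, ‖Q y‖) ≤ ∫ y in Bset, ‖Q y‖ := by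
    apply setIntegral_mono_set hQint
    · exact Filter.Eventually.of_forall fun y => norm_nonneg _
    · exact HasSubset.Subset.eventuallyLE Rset_subset_Bset
  calc ‖F n‖ ≤ ∫ y in Rset, ‖w y • Q y‖ := h1
  _ ≤ ∫ y in Rset, M * ‖Q y‖ := h2
  _ = M * ∫ y in Rset, ‖Q y‖ := h3
  _ ≤ M * ∫ y in Bset, ‖Q y‖ := by
      apply mul_le_mul_of_nonneg_left h4 (by linarith)

end Stmt19

namespace Stmt19

lemma toLp_sum {α : Type} [MeasurableSpace α] {μ : Measure α} {q : ℝ≥0∞}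
    {ι : Type} (t : Finset ι) (f : ι → α → ℝ) (hf : ∀ i, MemLp (f i) q μ) :
    ∀ (H : MemLp (fun ω => ∑ i ∈ t, f i ω) q μ),
      (∑ i ∈ t, (hf i).toLp (f i)) = H.toLp (fun ω => ∑ i ∈ t, f i ω) := by
  classical
  induction t using Finset.induction_on with
  | empty =>
      intro H
      simp only [Finset.sum_empty]
      exact (MemLp.toLp_zero H).symm
  | @insert a t ha ih =>
      intro H
      rw [Finset.sum_insert ha]
      have Ht : MemLp (fun ω => ∑ i ∈ t, f i ω) q μ :=
        memLp_finset_sum t (fun i _ => hf i)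
      rw [ih Ht, ← MemLp.toLp_add (hf a) Ht]
      apply MemLp.toLp_congr
      apply Filter.Eventually.of_forall
      intro ω
      simp [Finset.sum_insert ha]

end Stmt19


/-- Annealed equivalence of norms for random anisotropic polynomials (the
'three-point argument' ingredient in the proof of Lemma 7.3): with a constant `C`
depending only on `η` and `p`, for all `r > 0`, base points `x`, and p-integrable
random coefficients `c_n` (`|n| < η`),
`max_{|n|<η} r^{|n|} E^{1/p}|c_n|^p ≤ C ⨍_{B_r(x)} E^{1/p}|Σ_n c_n (z−x)^n|^p dz`. -/
theorem stmt_19 {Ω : Type} [MeasurableSpace Ω] (P : Measure Ω) [IsProbabilityMeasure P]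
    (η p : ℝ) (hη : 0 < η) (hp : 1 ≤ p) :
    ∃ C : ℝ, 0 < C ∧ ∀ r : ℝ, 0 < r → ∀ x : E2, ∀ c : ℕ × ℕ → Ω → ℝ,
      (∀ n : ℕ × ℕ, ((n.1 : ℝ) + 2 * n.2) < η → MemLp (c n) (ENNReal.ofReal p) P) →
      ∀ n : ℕ × ℕ, ((n.1 : ℝ) + 2 * n.2) < η →
        ENNReal.ofReal (r ^ ((n.1 : ℝ) + 2 * n.2)) * eLpNorm (c n) (ENNReal.ofReal p) P
          ≤ ENNReal.ofReal (C * ((volume {z : E2 | pnorm (z - x) ≤ r}).toReal)⁻¹ *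
              ∫ z in {z : E2 | pnorm (z - x) ≤ r},
                (eLpNorm (fun ω =>
                    ∑ᶠ m ∈ {m : ℕ × ℕ | ((m.1 : ℝ) + 2 * m.2) < η},
                      c m ω * (z 0 - x 0) ^ m.1 * (z 1 - x 1) ^ m.2)
                  (ENNReal.ofReal p) P).toReal) := by

  classical
  set q : ℝ≥0∞ := ENNReal.ofReal p with hq
  haveI : Fact (1 ≤ q) := ⟨ENNReal.one_le_ofReal.mpr hp⟩
  set N : ℕ := ⌈η⌉₊ with hN
  obtain ⟨C₀, hC₀, hcore⟩ := Stmt19.core (X := Lp ℝ q P) N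
  set vB : ℝ := (volume Stmt19.Bset).toReal with hvB
  have hvBpos : 0 < vB :=
    ENNReal.toReal_pos (ne_of_gt Stmt19.volume_Bset_pos) Stmt19.volume_Bset_lt_top.ne
  refine ⟨C₀ * vB, by positivity, ?_⟩
  intro r hr x c hc n hn
  have hmemTN : ∀ m : ℕ × ℕ, ((m.1:ℝ) + 2 * m.2) < η → m ∈ Stmt19.TN N := by
    intro m hm
    have hc2 : (0:ℝ) ≤ (m.1 : ℝ) := Nat.cast_nonneg _
    have hc3 : (0:ℝ) ≤ (m.2 : ℝ) := Nat.cast_nonneg _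
    have hceil : η ≤ (N:ℝ) := by rw [hN]; exact Nat.le_ceil η
    rw [Stmt19.TN, Finset.mem_product, Finset.mem_range, Finset.mem_range]
    constructor
    · have : (m.1:ℝ) < (N:ℝ) := by linarith
      exact_mod_cast this
    · have : (m.2:ℝ) < (N:ℝ) := by linarith
      exact_mod_cast this
  set S' : Finset (ℕ × ℕ) := (Stmt19.TN N).filter (fun m => ((m.1:ℝ) + 2 * m.2) < η) with hS'
  have hSset : {m : ℕ × ℕ | ((m.1 : ℝ) + 2 * m.2) < η} = ↑S' := by
    ext m
    simp only [Set.mem_setOf_eq, hS', Finset.coe_filter, Finset.mem_coe]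
    constructor
    · intro h; exact ⟨hmemTN m h, h⟩
    · intro h; exact h.2
  set cc : ℕ × ℕ → Ω → ℝ := fun m => if ((m.1:ℝ) + 2 * m.2) < η then c m else 0 with hccdef
  have hcc : ∀ m, MemLp (cc m) q P := by
    intro m
    show MemLp (if ((m.1:ℝ) + 2 * m.2) < η then c m else 0) q P
    split_ifs with h
    · exact hc m h
    · exact MemLp.zero
  set F : ℕ × ℕ → Lp ℝ q P := fun m => (hcc m).toLp (cc m) with hF
  set F' : ℕ × ℕ → Lp ℝ q P := fun m => (r ^ (m.1 + 2 * m.2) : ℝ) • F m with hF'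
  have hkey := hcore F' n (hmemTN n hn)
  -- LHS identification
  have hcceq : cc n = c n := if_pos hn
  have hFn : ‖F n‖ = (eLpNorm (c n) q P).toReal := by
    have h1 : F n = (hc n hn).toLp (c n) :=
      MemLp.toLp_congr (hcc n) (hc n hn) (Filter.Eventually.of_forall fun ω => by rw [hcceq])
    rw [h1]
    exact Lp.norm_toLp (c n) (hc n hn)
  have hLHS : ‖F' n‖ = r ^ (n.1 + 2 * n.2) * (eLpNorm (c n) q P).toReal := by
    have h1 : F' n = (r ^ (n.1 + 2 * n.2) : ℝ) • F n := rfl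
    rw [h1, norm_smul, Real.norm_eq_abs, abs_of_pos (pow_pos hr _), hFn]
  -- transfer of the integrand under the scaling map
  have hTy : ∀ y : E2,
      ‖∑ m ∈ Stmt19.TN N, ((y 0) ^ m.1 * (y 1) ^ m.2) • F' m‖
        = ‖∑ m ∈ Stmt19.TN N,
            (((Stmt19.Tmap r x y) 0 - x 0) ^ m.1 * ((Stmt19.Tmap r x y) 1 - x 1) ^ m.2) • F m‖ := by
    intro y
    have h0 : (Stmt19.Tmap r x y) 0 - x 0 = r * y 0 := by
      simp [Stmt19.Tmap, PiLp.add_apply, Stmt19.Ldiag_apply0]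
    have h1 : (Stmt19.Tmap r x y) 1 - x 1 = r ^ 2 * y 1 := by
      simp [Stmt19.Tmap, PiLp.add_apply, Stmt19.Ldiag_apply1]
    rw [h0, h1]
    congr 1
    apply Finset.sum_congr rfl
    intro m _
    have h2 : F' m = (r ^ (m.1 + 2 * m.2) : ℝ) • F m := rfl
    rw [h2, smul_smul]
    congr 1
    rw [mul_pow, mul_pow, ← pow_mul]
    ring
  -- identification of the integrand with the eLpNorm of the random polynomial
  have hgf : ∀ z : E2,
      ‖∑ m ∈ Stmt19.TN N, ((z 0 - x 0) ^ m.1 * (z 1 - x 1) ^ m.2) • F m‖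
        = (eLpNorm (fun ω =>
            ∑ᶠ m ∈ {m : ℕ × ℕ | ((m.1 : ℝ) + 2 * m.2) < η},
              c m ω * (z 0 - x 0) ^ m.1 * (z 1 - x 1) ^ m.2) q P).toReal := by
    intro z
    set α : ℕ × ℕ → ℝ := fun m => (z 0 - x 0) ^ m.1 * (z 1 - x 1) ^ m.2 with hα
    have hsmul : ∀ m : ℕ × ℕ, (α m) • F m = ((hcc m).const_smul (α m)).toLp (α m • cc m) :=
      fun m => (MemLp.toLp_const_smul (α m) (hcc m)).symm
    have hsum := Stmt19.toLp_sum (Stmt19.TN N) (fun m => α m • cc m)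
      (fun m => (hcc m).const_smul (α m))
      (memLp_finset_sum (Stmt19.TN N) (fun m _ => (hcc m).const_smul (α m)))
    simp_rw [show ∀ m : ℕ × ℕ, ((z 0 - x 0) ^ m.1 * (z 1 - x 1) ^ m.2) • F m = _ from hsmul]
    rw [hsum, Lp.norm_toLp]
    congr 1
    apply eLpNorm_congr_ae
    apply Filter.Eventually.of_forall
    intro ω
    beta_reduce
    have hstep : (∑ m ∈ Stmt19.TN N, (α m • cc m) ω) = ∑ m ∈ S', (α m • cc m) ω := by
      refine (Finset.sum_subset (Finset.filter_subset _ _) ?_).symm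
      intro m hmTN hmS
      have hcond : ¬ ((m.1:ℝ) + 2 * m.2 < η) := by
        intro h; exact hmS (Finset.mem_filter.mpr ⟨hmTN, h⟩)
      have hz : cc m = 0 := if_neg hcond
      simp [hz]
    rw [hstep, hSset, finsum_mem_coe_finset]
    apply Finset.sum_congr rfl
    intro m hm
    have hcond : ((m.1:ℝ) + 2 * m.2 < η) := (Finset.mem_filter.mp hm).2
    have hce : cc m = c m := if_pos hcond
    rw [Pi.smul_apply, hce, smul_eq_mul, hα]
    ring
  -- change of variables
  have hcov := Stmt19.cov r hr x
    (fun z => ‖∑ m ∈ Stmt19.TN N, ((z 0 - x 0) ^ m.1 * (z 1 - x 1) ^ m.2) • F m‖)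
  simp only at hcov
  have hI : (∫ z in {z : E2 | pnorm (z - x) ≤ r},
        (eLpNorm (fun ω =>
            ∑ᶠ m ∈ {m : ℕ × ℕ | ((m.1 : ℝ) + 2 * m.2) < η},
              c m ω * (z 0 - x 0) ^ m.1 * (z 1 - x 1) ^ m.2) q P).toReal)
      = r ^ 3 * ∫ y in Stmt19.Bset,
          ‖∑ m ∈ Stmt19.TN N, ((y 0) ^ m.1 * (y 1) ^ m.2) • F' m‖ := by
    rw [show (fun z : E2 => (eLpNorm (fun ω =>
            ∑ᶠ m ∈ {m : ℕ × ℕ | ((m.1 : ℝ) + 2 * m.2) < η},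
              c m ω * (z 0 - x 0) ^ m.1 * (z 1 - x 1) ^ m.2) q P).toReal)
        = fun z : E2 => ‖∑ m ∈ Stmt19.TN N, ((z 0 - x 0) ^ m.1 * (z 1 - x 1) ^ m.2) • F m‖
      from funext fun z => (hgf z).symm]
    rw [hcov]
    congr 1
    apply setIntegral_congr_fun Stmt19.measurableSet_Bset
    intro y _
    exact (hTy y).symm
  -- volume of the ball
  have hvol : (volume {z : E2 | pnorm (z - x) ≤ r}).toReal = r ^ 3 * vB := by
    rw [Stmt19.vol_ball r hr x, ENNReal.toReal_mul, ENNReal.toReal_ofReal (by positivity)]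
  -- real-valued inequality
  set IB : ℝ := ∫ y in Stmt19.Bset,
    ‖∑ m ∈ Stmt19.TN N, ((y 0) ^ m.1 * (y 1) ^ m.2) • F' m‖ with hIB
  have hreal : r ^ (n.1 + 2 * n.2) * (eLpNorm (c n) q P).toReal
      ≤ C₀ * vB * ((volume {z : E2 | pnorm (z - x) ≤ r}).toReal)⁻¹ *
        ∫ z in {z : E2 | pnorm (z - x) ≤ r},
          (eLpNorm (fun ω =>
              ∑ᶠ m ∈ {m : ℕ × ℕ | ((m.1 : ℝ) + 2 * m.2) < η},
                c m ω * (z 0 - x 0) ^ m.1 * (z 1 - x 1) ^ m.2) q P).toReal := by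
    rw [hI, hvol]
    have hsimp : C₀ * vB * (r ^ 3 * vB)⁻¹ * (r ^ 3 * IB) = C₀ * IB := by
      have hr3 : (r:ℝ) ^ 3 ≠ 0 := by positivity
      field_simp
    rw [hsimp]
    rw [← hLHS]
    exact hkey
  -- pass to ENNReal
  have hfin : eLpNorm (c n) q P ≠ ⊤ := (hc n hn).2.ne
  have hexp : r ^ ((n.1 : ℝ) + 2 * (n.2:ℝ)) = r ^ (n.1 + 2 * n.2) := by
    rw [show ((n.1:ℝ) + 2 * (n.2:ℝ)) = ((n.1 + 2 * n.2 : ℕ) : ℝ) by push_cast; ring,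
      Real.rpow_natCast]
  calc ENNReal.ofReal (r ^ ((n.1 : ℝ) + 2 * n.2)) * eLpNorm (c n) q P
      = ENNReal.ofReal (r ^ (n.1 + 2 * n.2) * (eLpNorm (c n) q P).toReal) := by
        rw [hexp, ← ENNReal.ofReal_toReal hfin, ← ENNReal.ofReal_mul (by positivity)]
        rw [ENNReal.ofReal_toReal hfin]
  _ ≤ _ := ENNReal.ofReal_le_ofReal hreal
end
end
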